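/- The composition of two definable transductions between relational structures is a definable transduction. -/

import Mathlib

set_option autoImplicit false

namespace GraphCF

/-! ### Counting Monadic Second Order Logic and definable transductions -/

/-- A relational signature: relation symbols with arities. -/
structure RSig : Type 1 where
  Sym : Type
  arity : Sym → ℕ

/-- A finite relational structure over the signature `R`. -/
structure Struc (R : RSig) : Type 1 where
  U : Type
  finU : Finite U
  rel : ∀ r : R.Sym, (Fin (R.arity r) → U) → Prop

/-- CMSO formulae over `R`; first-order and second-order variables are indexed
by natural numbers, `card X q p` is the cardinality constraint `|X| ≡ p (mod q)`. -/
inductive CMSO (R : RSig) : Type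
  | eq (x y : ℕ)
  | rel (r : R.Sym) (xs : Fin (R.arity r) → ℕ)
  | mem (X x : ℕ)
  | card (X q p : ℕ)
  | not (φ : CMSO R)
  | and (φ ψ : CMSO R)
  | exFO (x : ℕ) (φ : CMSO R)
  | exSO (X : ℕ) (φ : CMSO R)

/-- The satisfaction relation of CMSO, with first-order store `s1` and
second-order store `s2`. -/
def Sat {R : RSig} (S : Struc R) : (ℕ → S.U) → (ℕ → Set S.U) → CMSO R → Prop
  | s1, _, .eq x y => s1 x = s1 y
  | s1, _, .rel r xs => S.rel r fun i => s1 (xs i)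
  | s1, s2, .mem X x => s1 x ∈ s2 X
  | _, s2, .card X q p => ∃ k : ℕ, Nat.card ↥(s2 X) = k * q + p
  | s1, s2, .not φ => ¬ Sat S s1 s2 φ
  | s1, s2, .and φ ψ => Sat S s1 s2 φ ∧ Sat S s1 s2 ψ
  | s1, s2, .exFO x φ => ∃ u : S.U, Sat S (Function.update s1 x u) s2 φ
  | s1, s2, .exSO X φ => ∃ V : Set S.U, Sat S s1 (Function.update s2 X V) φ

/-- Satisfaction of a sentence. -/
def Models {R : RSig} (S : Struc R) (φ : CMSO R) : Prop :=
  ∀ (s1 : ℕ → S.U) (s2 : ℕ → Set S.U), Sat S s1 s2 φ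

/-- Satisfaction of a formula whose free variables are among the set
parameters, valued by `P`. -/
def ModelsP {R : RSig} (S : Struc R) (P : ℕ → Set S.U) (φ : CMSO R) : Prop :=
  ∀ s1 : ℕ → S.U, Sat S s1 P φ

/-- A definable set of structures: the models of some CMSO sentence. -/
def DefinableStruc {R : RSig} (𝒮 : Set (Struc R)) : Prop :=
  ∃ φ : CMSO R, 𝒮 = {S | Models S φ}

/-- Isomorphism of relational structures. -/
def SIso {R : RSig} (S₁ S₂ : Struc R) : Prop :=
  ∃ e : S₁.U ≃ S₂.U, ∀ (q : R.Sym) (f : Fin (R.arity q) → S₁.U),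
    S₁.rel q f ↔ S₂.rel q (fun i => e (f i))

/-- A transduction scheme from `R`-structures to `R'`-structures: `k` copies,
a domain formula, universe formulas (first-order variable `0` denotes the
element) and relation formulas (first-order variables `0, …, arity−1` denote
the arguments); the set parameters are the free second-order variables. -/
structure TScheme (R R' : RSig) : Type where
  k : ℕ
  dom : CMSO R
  univ : Fin k → CMSO R
  rel : ∀ q : R'.Sym, (Fin (R'.arity q) → Fin k) → CMSO R

/-- The output structure of a transduction scheme on input `S` with parameter
valuation `P`. -/
def TOut {R R' : RSig} (Θ : TScheme R R') (S : Struc R) (P : ℕ → Set S.U) : Struc R' where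
  U := {ui : S.U × Fin Θ.k //
    ∀ s1 : ℕ → S.U, Sat S (Function.update s1 0 ui.1) P (Θ.univ ui.2)}
  finU := by
    have := S.finU
    exact Subtype.finite
  rel q f := ∀ s1 : ℕ → S.U,
    (∀ j : Fin (R'.arity q), s1 j.1 = ((f j).1).1) →
    Sat S s1 P (Θ.rel q fun j => ((f j).1).2)

/-- The relation between input and output structures defined by a scheme. -/
def TRel {R R' : RSig} (Θ : TScheme R R') (S : Struc R) (S' : Struc R') : Prop :=
  ∃ P : ℕ → Set S.U, ModelsP S P Θ.dom ∧ SIso (TOut Θ S P) S'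

/-- A definable transduction: a relation between structures that arises from
some transduction scheme. -/
def DefTrans {R R' : RSig} (δ : Struc R → Struc R' → Prop) : Prop :=
  ∃ Θ : TScheme R R', ∀ S S', δ S S' ↔ TRel Θ S S'

/-! ### Auxiliary: combinators, free variables, agreement, renaming -/

open Function

namespace CMSO

variable {R : RSig}

/-- A formula that is always true. -/
protected def tt : CMSO R := .eq 0 0

/-- A formula that is always false. -/
protected def ff : CMSO R := .not .tt

/-- Disjunction. -/
protected def or (φ ψ : CMSO R) : CMSO R := .not (.and (.not φ) (.not ψ))

/-- Implication. -/
protected def imp (φ ψ : CMSO R) : CMSO R := .not (.and φ (.not ψ))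

/-- Bi-implication. -/
protected def iff (φ ψ : CMSO R) : CMSO R := .and (φ.imp ψ) (ψ.imp φ)

/-- Universal first-order quantification. -/
protected def all (x : ℕ) (φ : CMSO R) : CMSO R := .not (.exFO x (.not φ))

/-- Finite conjunction. -/
def bigAnd (l : List (CMSO R)) : CMSO R := l.foldr .and .tt

/-- Finite disjunction. -/
def bigOr (l : List (CMSO R)) : CMSO R := l.foldr .or .ff

/-- Universal first-order quantification over a list of variables. -/
def bigAll (l : List ℕ) (φ : CMSO R) : CMSO R := l.foldr .all φ

/-- Existential second-order quantification over a list of variables. -/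
def bigExSO (l : List ℕ) (φ : CMSO R) : CMSO R := l.foldr .exSO φ

/-- Renaming of all (first- and second-order) variables. -/
def rename (fF fS : ℕ → ℕ) : CMSO R → CMSO R
  | .eq x y => .eq (fF x) (fF y)
  | .rel r xs => .rel r (fun j => fF (xs j))
  | .mem X x => .mem (fS X) (fF x)
  | .card X q p => .card (fS X) q p
  | .not φ => .not (rename fF fS φ)
  | .and φ ψ => .and (rename fF fS φ) (rename fF fS ψ)
  | .exFO x φ => .exFO (fF x) (rename fF fS φ)
  | .exSO X φ => .exSO (fS X) (rename fF fS φ)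

/-- Free first-order variables of a formula. -/
def freeFO : CMSO R → Finset ℕ
  | .eq x y => {x, y}
  | .rel _ xs => Finset.image xs Finset.univ
  | .mem _ x => {x}
  | .card _ _ _ => ∅
  | .not φ => freeFO φ
  | .and φ ψ => freeFO φ ∪ freeFO ψ
  | .exFO x φ => (freeFO φ).erase x
  | .exSO _ φ => freeFO φ

/-- A bound (plus one) on the free first-order variables of a formula. -/
def fb (φ : CMSO R) : ℕ := (freeFO φ).sup id + 1

lemma lt_fb {φ : CMSO R} {y : ℕ} (h : y ∈ freeFO φ) : y < fb φ :=
  Nat.lt_succ_of_le (Finset.le_sup (f := id) h)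

lemma fb_pos (φ : CMSO R) : 0 < fb φ := Nat.succ_pos _

end CMSO

namespace GraphCFAux

open CMSO

variable {R : RSig} {S : Struc R}

lemma sat_tt (s1 : ℕ → S.U) (s2 : ℕ → Set S.U) : Sat S s1 s2 CMSO.tt := rfl

lemma sat_ff (s1 : ℕ → S.U) (s2 : ℕ → Set S.U) : ¬ Sat S s1 s2 CMSO.ff := by
  intro h; exact h rfl

lemma sat_not {s1 s2} {φ : CMSO R} : Sat S s1 s2 (.not φ) ↔ ¬ Sat S s1 s2 φ := Iff.rfl

lemma sat_and {s1 s2} {φ ψ : CMSO R} :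
    Sat S s1 s2 (.and φ ψ) ↔ Sat S s1 s2 φ ∧ Sat S s1 s2 ψ := Iff.rfl

lemma sat_or {s1 s2} {φ ψ : CMSO R} :
    Sat S s1 s2 (φ.or ψ) ↔ Sat S s1 s2 φ ∨ Sat S s1 s2 ψ := by
  simp [CMSO.or, Sat, or_iff_not_and_not]

lemma sat_imp {s1 s2} {φ ψ : CMSO R} :
    Sat S s1 s2 (φ.imp ψ) ↔ (Sat S s1 s2 φ → Sat S s1 s2 ψ) := by
  unfold CMSO.imp; rw [sat_not, sat_and, sat_not]; tauto

lemma sat_iff {s1 s2} {φ ψ : CMSO R} :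
    Sat S s1 s2 (φ.iff ψ) ↔ (Sat S s1 s2 φ ↔ Sat S s1 s2 ψ) := by
  unfold CMSO.iff; rw [sat_and, sat_imp, sat_imp]; tauto

lemma sat_all {s1 s2} {x : ℕ} {φ : CMSO R} :
    Sat S s1 s2 (CMSO.all x φ) ↔ ∀ u : S.U, Sat S (Function.update s1 x u) s2 φ := by
  simp [CMSO.all, Sat]

lemma sat_bigAnd {s1 s2} {l : List (CMSO R)} :
    Sat S s1 s2 (bigAnd l) ↔ ∀ φ ∈ l, Sat S s1 s2 φ := by
  induction l with
  | nil => simpa [bigAnd] using sat_tt s1 s2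
  | cons a l ih =>
    show Sat S s1 s2 (.and a (bigAnd l)) ↔ _
    rw [sat_and, ih]; simp

lemma sat_bigOr {s1 s2} {l : List (CMSO R)} :
    Sat S s1 s2 (bigOr l) ↔ ∃ φ ∈ l, Sat S s1 s2 φ := by
  induction l with
  | nil => simpa [bigOr] using sat_ff s1 s2
  | cons a l ih =>
    show Sat S s1 s2 (CMSO.or a (bigOr l)) ↔ _
    rw [sat_or, ih]; simp

lemma sat_bigAll {s1 s2} {l : List ℕ} {φ : CMSO R} :
    Sat S s1 s2 (bigAll l φ) ↔
      ∀ t1 : ℕ → S.U, (∀ x, x ∉ l → t1 x = s1 x) → Sat S t1 s2 φ := by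
  induction l generalizing s1 with
  | nil =>
    constructor
    · intro h t1 ht
      have : t1 = s1 := funext fun x => ht x (by simp)
      rwa [this]
    · intro h; exact h s1 (fun _ _ => rfl)
  | cons a l ih =>
    show Sat S s1 s2 (CMSO.all a (bigAll l φ)) ↔ _
    rw [sat_all]
    constructor
    · intro h t1 ht
      rcases (ih (s1 := Function.update s1 a (t1 a))).mp (h (t1 a)) with h'
      refine h' t1 fun x hx => ?_
      rcases eq_or_ne x a with rfl | hxa
      · simp
      · simp [Function.update_of_ne hxa]
        exact ht x (by simp [hx, hxa])
    · intro h u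
      refine (ih).mpr fun t1 ht => h t1 fun x hx => ?_
      have hxa : x ≠ a := fun h' => hx (by simp [h'])
      have hxl : x ∉ l := fun h' => hx (by simp [h'])
      rw [ht x hxl, Function.update_of_ne hxa]

lemma sat_bigExSO {s1 s2} {l : List ℕ} {φ : CMSO R} :
    Sat S s1 s2 (bigExSO l φ) ↔
      ∃ t2 : ℕ → Set S.U, (∀ X, X ∉ l → t2 X = s2 X) ∧ Sat S s1 t2 φ := by
  induction l generalizing s2 with
  | nil =>
    constructor
    · intro h; exact ⟨s2, fun _ _ => rfl, h⟩
    · rintro ⟨t2, ht, h⟩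
      have : t2 = s2 := funext fun X => ht X (by simp)
      rwa [this] at h
  | cons a l ih =>
    show Sat S s1 s2 (.exSO a (bigExSO l φ)) ↔ _
    constructor
    · rintro ⟨V, hV⟩
      rcases ih.mp hV with ⟨t2, ht, h⟩
      refine ⟨t2, fun X hX => ?_, h⟩
      rw [ht X (fun h' => hX (by simp [h'])),
        Function.update_of_ne (fun h' => hX (by simp [h']))]
    · rintro ⟨t2, ht, h⟩
      refine ⟨t2 a, ih.mpr ⟨t2, fun X hX => ?_, h⟩⟩
      rcases eq_or_ne X a with rfl | hXa
      · simp
      · rw [Function.update_of_ne hXa]; exact ht X (by simp [hX, hXa])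

/-- Satisfaction only depends on the values of the first-order store on the
free variables. -/
lemma sat_congrFO {φ : CMSO R} {s1 t1 : ℕ → S.U} {s2 : ℕ → Set S.U}
    (h : ∀ x ∈ freeFO φ, s1 x = t1 x) : Sat S s1 s2 φ ↔ Sat S t1 s2 φ := by
  induction φ generalizing s1 t1 s2 with
  | eq x y => simp only [Sat, h x (by simp [freeFO]), h y (by simp [freeFO])]
  | rel r xs =>
    show S.rel r _ ↔ S.rel r _
    have : (fun i => s1 (xs i)) = fun i => t1 (xs i) :=
      funext fun i => h (xs i) (by simp [freeFO])
    rw [this]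
  | mem X x => simp only [Sat, h x (by simp [freeFO])]
  | card X q p => exact Iff.rfl
  | not φ ih => exact not_congr (ih h)
  | and φ ψ ihφ ihψ =>
    exact and_congr (ihφ fun x hx => h x (by simp [freeFO, hx]))
      (ihψ fun x hx => h x (by simp [freeFO, hx]))
  | exFO x φ ih =>
    refine exists_congr fun u => ih fun y hy => ?_
    rcases eq_or_ne y x with rfl | hyx
    · simp
    · simp only [Function.update_of_ne hyx]
      exact h y (by simp [freeFO, Finset.mem_erase, hyx, hy])
  | exSO X φ ih => exact exists_congr fun V => ih h

/-- Renaming along injections. -/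
lemma sat_rename {fF fS : ℕ → ℕ} (hF : Function.Injective fF)
    (hS : Function.Injective fS) (φ : CMSO R) (s1 : ℕ → S.U) (s2 : ℕ → Set S.U) :
    Sat S s1 s2 (rename fF fS φ) ↔ Sat S (s1 ∘ fF) (s2 ∘ fS) φ := by
  induction φ generalizing s1 s2 with
  | eq x y => exact Iff.rfl
  | rel r xs => exact Iff.rfl
  | mem X x => exact Iff.rfl
  | card X q p => exact Iff.rfl
  | not φ ih => exact not_congr (ih _ _)
  | and φ ψ ihφ ihψ => exact and_congr (ihφ _ _) (ihψ _ _)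
  | exFO x φ ih =>
    refine exists_congr fun u => (ih _ _).trans ?_
    have : Function.update s1 (fF x) u ∘ fF = Function.update (s1 ∘ fF) x u := by
      funext y
      rcases eq_or_ne y x with rfl | hyx
      · simp
      · simp [Function.update_of_ne hyx, Function.update_of_ne (fun h => hyx (hF h))]
    rw [this]
  | exSO X φ ih =>
    refine exists_congr fun V => (ih _ _).trans ?_
    have : Function.update s2 (fS X) V ∘ fS = Function.update (s2 ∘ fS) X V := by
      funext Y
      rcases eq_or_ne Y X with rfl | hYX
      · simp
      · simp [Function.update_of_ne hYX, Function.update_of_ne (fun h => hYX (hS h))]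
    rw [this]

end GraphCFAux
/-! ### Isomorphism invariance -/

namespace GraphCFAux

open CMSO

variable {R R' : RSig}

lemma comp_update' {α β : Type*} (e : α → β) (s1 : ℕ → α) (x : ℕ) (u : α) :
    (fun y => e (Function.update s1 x u y)) = Function.update (fun y => e (s1 y)) x (e u) := by
  funext y
  rcases eq_or_ne y x with rfl | hyx
  · simp
  · simp [Function.update_of_ne hyx]

/-- Satisfaction is invariant under isomorphism. -/
lemma sat_isoMap {S₁ S₂ : Struc R} (e : S₁.U ≃ S₂.U)
    (hrel : ∀ (q : R.Sym) (f : Fin (R.arity q) → S₁.U),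
      S₁.rel q f ↔ S₂.rel q (fun i => e (f i)))
    (φ : CMSO R) (s1 : ℕ → S₁.U) (s2 : ℕ → Set S₁.U) :
    Sat S₁ s1 s2 φ ↔ Sat S₂ (fun x => e (s1 x)) (fun X => e '' s2 X) φ := by
  induction φ generalizing s1 s2 with
  | eq x y => exact (Equiv.apply_eq_iff_eq e).symm
  | rel r xs => exact hrel r _
  | mem X x =>
    show s1 x ∈ s2 X ↔ e (s1 x) ∈ e '' s2 X
    exact (Function.Injective.mem_set_image e.injective).symm
  | card X q p =>
    show (∃ k, Nat.card (s2 X) = k * q + p) ↔ ∃ k, Nat.card (e '' s2 X) = k * q + p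
    rw [Nat.card_congr (Equiv.Set.image e (s2 X) e.injective)]
  | not φ ih => exact not_congr (ih _ _)
  | and φ ψ ihφ ihψ => exact and_congr (ihφ _ _) (ihψ _ _)
  | exFO x φ ih =>
    constructor
    · rintro ⟨u, hu⟩
      exact ⟨e u, by rw [← comp_update' e]; exact (ih _ _).mp hu⟩
    · rintro ⟨u, hu⟩
      refine ⟨e.symm u, (ih _ _).mpr ?_⟩
      rw [comp_update' e]
      simpa using hu
  | exSO X φ ih =>
    constructor
    · rintro ⟨V, hV⟩
      exact ⟨e '' V, by rw [← comp_update' (Set.image e)]; exact (ih _ _).mp hV⟩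
    · rintro ⟨V, hV⟩
      refine ⟨e.symm '' V, (ih _ _).mpr ?_⟩
      rw [comp_update' (Set.image e)]
      simpa [Set.image_image] using hV

lemma siso_symm {S₁ S₂ : Struc R} (h : SIso S₁ S₂) : SIso S₂ S₁ := by
  rcases h with ⟨e, he⟩
  refine ⟨e.symm, fun q f => ?_⟩
  have := he q (fun i => e.symm (f i))
  simp only [Equiv.apply_symm_apply] at this
  exact this.symm

lemma siso_trans {S₁ S₂ S₃ : Struc R} (h : SIso S₁ S₂) (h' : SIso S₂ S₃) :
    SIso S₁ S₃ := by
  rcases h with ⟨e, he⟩; rcases h' with ⟨e', he'⟩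
  exact ⟨e.trans e', fun q f => (he q f).trans (he' q _)⟩

/-- Transport of the universe condition along an isomorphism. -/
lemma univCond_iso {S₁ S₂ : Struc R} (e : S₁.U ≃ S₂.U)
    (hrel : ∀ (q : R.Sym) (f : Fin (R.arity q) → S₁.U),
      S₁.rel q f ↔ S₂.rel q (fun i => e (f i)))
    (P : ℕ → Set S₁.U) (u : S₁.U) (ψ : CMSO R) :
    (∀ s1 : ℕ → S₁.U, Sat S₁ (Function.update s1 0 u) P ψ) ↔
    (∀ s1 : ℕ → S₂.U, Sat S₂ (Function.update s1 0 (e u)) (fun n => e '' P n) ψ) := by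
  constructor
  · intro h s1
    have := (sat_isoMap e hrel ψ (Function.update (fun x => e.symm (s1 x)) 0 u) P).mp
      (h (fun x => e.symm (s1 x)))
    rw [comp_update' e] at this
    simpa using this
  · intro h s1
    have h2 := h (fun x => e (s1 x))
    rw [← comp_update' e] at h2
    exact (sat_isoMap e hrel ψ (Function.update s1 0 u) P).mpr h2

/-- Transport of a transduction output along an isomorphism of inputs. -/
lemma tout_iso {Θ : TScheme R R'} {S₁ S₂ : Struc R} (e : S₁.U ≃ S₂.U)
    (hrel : ∀ (q : R.Sym) (f : Fin (R.arity q) → S₁.U),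
      S₁.rel q f ↔ S₂.rel q (fun i => e (f i)))
    (P : ℕ → Set S₁.U) :
    SIso (TOut Θ S₁ P) (TOut Θ S₂ (fun n => e '' P n)) := by
  refine ⟨⟨fun m => ⟨(e m.1.1, m.1.2), ?_⟩, fun m => ⟨(e.symm m.1.1, m.1.2), ?_⟩, ?_, ?_⟩, ?_⟩
  · exact (univCond_iso e hrel P m.1.1 (Θ.univ m.1.2)).mp m.2
  · have h := m.2
    rw [← (e.apply_symm_apply m.1.1)] at h
    exact (univCond_iso e hrel P (e.symm m.1.1) (Θ.univ m.1.2)).mpr h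
  · intro m; apply Subtype.ext; simp
  · intro m; apply Subtype.ext; simp
  · intro q f
    show (∀ s1 : ℕ → S₁.U, _ → _) ↔ (∀ s1 : ℕ → S₂.U, _ → _)
    constructor
    · intro h s1 hs1
      have h2 := h (fun x => e.symm (s1 x)) (fun j => by
        show e.symm (s1 j.1) = _; rw [hs1 j]; exact e.symm_apply_apply _)
      have := (sat_isoMap e hrel _ _ P).mp h2
      simp at this; exact this
    · intro h s1 hs1
      have h2 := h (fun x => e (s1 x)) (fun j => by
        show e (s1 j.1) = _; rw [hs1 j]; rfl)
      exact (sat_isoMap e hrel _ _ P).mpr h2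

/-- `ModelsP` transport along an isomorphism. -/
lemma modelsP_iso {S₁ S₂ : Struc R} (e : S₁.U ≃ S₂.U)
    (hrel : ∀ (q : R.Sym) (f : Fin (R.arity q) → S₁.U),
      S₁.rel q f ↔ S₂.rel q (fun i => e (f i)))
    (P : ℕ → Set S₁.U) (φ : CMSO R) :
    ModelsP S₁ P φ ↔ ModelsP S₂ (fun n => e '' P n) φ := by
  constructor
  · intro h s1
    have := (sat_isoMap e hrel φ (fun x => e.symm (s1 x)) P).mp (h _)
    simpa using this
  · intro h s1
    exact (sat_isoMap e hrel φ s1 P).mpr (h _)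

/-- `TRel` is invariant under isomorphism of the source. -/
lemma trel_iso {Θ : TScheme R R'} {S₁ S₂ : Struc R} {S' : Struc R'}
    (h : SIso S₁ S₂) (h' : TRel Θ S₂ S') : TRel Θ S₁ S' := by
  rcases siso_symm h with ⟨e, he⟩
  rcases h' with ⟨P, hP, hiso⟩
  refine ⟨fun n => e '' P n, (modelsP_iso e he P Θ.dom).mp hP, ?_⟩
  exact siso_trans (siso_symm (tout_iso e he P)) hiso

end GraphCFAux
/-! ### Arithmetic for cardinality constraints -/

namespace GraphCFAux

open Finset

lemma nat_card_sigma {ι : Type*} [Fintype ι] (f : ι → Type*) [∀ i, Finite (f i)] :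
    Nat.card (Σ i, f i) = ∑ i, Nat.card (f i) := by
  classical
  have : ∀ i, Fintype (f i) := fun i => Fintype.ofFinite _
  simp [Nat.card_eq_fintype_card]

/-- For positive modulus, the "≡ p, at least p" characterisation. -/
lemma exists_mul_add_iff {q p n : ℕ} (hq : 0 < q) :
    (∃ k, n = k * q + p) ↔ (n % q = p % q ∧ p ≤ n) := by
  constructor
  · rintro ⟨k, rfl⟩
    constructor
    · simp [Nat.add_mod, Nat.mul_mod_left]
    · omega
  · rintro ⟨hmod, hle⟩
    refine ⟨n / q - p / q, ?_⟩
    have h1 := Nat.div_add_mod n q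
    have h2 := Nat.div_add_mod p q
    have hdiv : p / q ≤ n / q := by
      apply Nat.div_le_div_right hle
    have : (n / q - p / q) * q = n / q * q - p / q * q := Nat.sub_mul _ _ _
    rw [this]
    have hq1 : p / q * q ≤ n / q * q := Nat.mul_le_mul_right q hdiv
    have hc1 : q * (n / q) = n / q * q := Nat.mul_comm _ _
    have hc2 : q * (p / q) = p / q * q := Nat.mul_comm _ _
    omega

/-- Distribute a total `s` among capacities `d`. -/
lemma distribute : ∀ (k : ℕ) (d : Fin k → ℕ) (s : ℕ), s ≤ ∑ i, d i →
    ∃ t : Fin k → ℕ, (∀ i, t i ≤ d i) ∧ ∑ i, t i = s := by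
  intro k
  induction k with
  | zero => intro d s hs; simp at hs; exact ⟨fun i => i.elim0, fun i => i.elim0, by simp [hs]⟩
  | succ k ih =>
    intro d s hs
    rw [Fin.sum_univ_succ] at hs
    rcases ih (fun i => d i.succ) (s - min s (d 0))
      (show s - min s (d 0) ≤ ∑ i : Fin k, d i.succ by omega) with ⟨t, ht, hsum⟩
    refine ⟨Fin.cons (min s (d 0)) t, ?_, ?_⟩
    · intro i
      refine Fin.cases ?_ ?_ i
      · simp
      · intro j; simpa using ht j
    · rw [Fin.sum_univ_succ]
      simp only [Fin.cons_zero, Fin.cons_succ]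
      have : ∑ i, t i = s - min s (d 0) := hsum
      omega

/-- The key decomposition of a counting constraint on a sum into counting
constraints on the summands. -/
lemma card_split (k₁ q p : ℕ) (n : Fin k₁ → ℕ) :
    (∃ k, (∑ i, n i) = k * q + p) ↔
      ∃ r : Fin k₁ → ℕ, (∀ i, r i ≤ p + k₁ * q + q) ∧
        (∃ k, (∑ i, r i) = k * q + p) ∧ (∀ i, ∃ k, n i = k * q + r i) := by
  constructor
  · rintro ⟨K, hK⟩
    rcases Nat.eq_zero_or_pos q with rfl | hq
    · refine ⟨n, fun i => ?_, ⟨0, by omega⟩, fun i => ⟨0, by omega⟩⟩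
      have : n i ≤ ∑ j, n j := Finset.single_le_sum (f := n) (fun j _ => Nat.zero_le _) (mem_univ i)
      omega
    · set a : Fin k₁ → ℕ := fun i => n i % q with ha
      set d : Fin k₁ → ℕ := fun i => n i / q with hd
      have hnd : ∀ i, n i = q * d i + a i := fun i => (Nat.div_add_mod (n i) q).symm
      have hsum : ∑ i, n i = q * (∑ i, d i) + ∑ i, a i := by
        rw [Finset.mul_sum, ← Finset.sum_add_distrib]
        exact Finset.sum_congr rfl fun i _ => hnd i
      have hamod : (∑ i, a i) % q = p % q := by
        have h1 : (∑ i, n i) % q = p % q := by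
          rw [hK]; simp [Nat.add_mod, Nat.mul_mod_left]
        rw [hsum] at h1
        rwa [Nat.mul_add_mod] at h1
      by_cases hcase : p ≤ ∑ i, a i
      · -- take r := a
        refine ⟨a, fun i => ?_, ?_, fun i => ⟨d i, by rw [hnd i]; ring⟩⟩
        · have : a i < q := Nat.mod_lt _ hq
          omega
        · exact (exists_mul_add_iff hq).mpr ⟨hamod, hcase⟩
      · -- p > ∑ a : distribute the missing multiples of q
        push_neg at hcase
        have hdvd : q ∣ (p - ∑ i, a i) := by
          have h1 : p % q = (∑ i, a i) % q := hamod.symm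
          have h2 := Nat.div_add_mod p q
          have h3 := Nat.div_add_mod (∑ i, a i) q
          have hle : (∑ i, a i) / q ≤ p / q := Nat.div_le_div_right (le_of_lt hcase)
          refine ⟨p / q - (∑ i, a i) / q, ?_⟩
          rw [Nat.mul_sub]
          omega
        rcases hdvd with ⟨s, hs⟩
        have hple : p ≤ ∑ i, n i := by omega
        have hsle : s ≤ ∑ i, d i := by
          have : q * s = p - ∑ i, a i := hs.symm
          have h2 : p - ∑ i, a i ≤ q * ∑ i, d i := by omega
          exact Nat.le_of_mul_le_mul_left (by omega) hq
        rcases distribute k₁ d s hsle with ⟨t, ht, hts⟩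
        refine ⟨fun i => a i + q * t i, fun i => ?_, ⟨0, ?_⟩, fun i => ?_⟩
        · have h1 : a i < q := Nat.mod_lt _ hq
          have h2 : q * t i ≤ q * s := Nat.mul_le_mul_left q (hts ▸
            Finset.single_le_sum (f := t) (fun j _ => Nat.zero_le _) (mem_univ i))
          have h3 : q * s ≤ p := by omega
          calc a i + q * t i ≤ q + p := by omega
          _ ≤ p + k₁ * q + q := by omega
        · have h5 : ∑ i, (a i + q * t i) = (∑ i, a i) + q * ∑ i, t i := by
            rw [Finset.mul_sum, ← Finset.sum_add_distrib]
          rw [h5, hts]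
          omega
        · refine ⟨d i - t i, ?_⟩
          have := ht i
          show n i = (d i - t i) * q + (a i + q * t i)
          rw [hnd i, Nat.sub_mul]
          have h2 : t i * q ≤ d i * q := Nat.mul_le_mul_right q this
          have h3 : q * d i = d i * q := Nat.mul_comm _ _
          have h4 : q * t i = t i * q := Nat.mul_comm _ _
          omega
  · rintro ⟨r, _, ⟨k, hk⟩, hr⟩
    choose ki hki using hr
    refine ⟨(∑ i, ki i) + k, ?_⟩
    have : ∑ i, n i = (∑ i, ki i) * q + ∑ i, r i := by
      rw [Finset.sum_mul, ← Finset.sum_add_distrib]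
      exact Finset.sum_congr rfl fun i _ => hki i
    rw [this, hk]
    ring

/-- All tuples with entries bounded by `B`. -/
def allTuples (B : ℕ) : (k : ℕ) → List (Fin k → ℕ)
  | 0 => [fun i => i.elim0]
  | k + 1 => (List.range (B + 1)).flatMap fun a => (allTuples B k).map (Fin.cons a)

lemma mem_allTuples {B : ℕ} : ∀ {k : ℕ} (r : Fin k → ℕ), (∀ i, r i ≤ B) →
    r ∈ allTuples B k := by
  intro k
  induction k with
  | zero =>
    intro r _
    have : r = fun i => i.elim0 := funext fun i => i.elim0
    simp [allTuples, this]
  | succ k ih =>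
    intro r hr
    have : r = Fin.cons (r 0) (Fin.tail r) := (Fin.cons_self_tail r).symm
    rw [this]
    simp only [allTuples, List.mem_flatMap, List.mem_map, List.mem_range]
    exact ⟨r 0, by have := hr 0; omega,
      Fin.tail r, ih (Fin.tail r) (fun i => hr i.succ), rfl⟩

lemma allTuples_bounded {B : ℕ} : ∀ {k : ℕ} {r : Fin k → ℕ}, r ∈ allTuples B k →
    ∀ i, r i ≤ B := by
  intro k
  induction k with
  | zero => intro r _ i; exact i.elim0
  | succ k ih =>
    intro r hr i
    simp only [allTuples, List.mem_flatMap, List.mem_map, List.mem_range] at hr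
    rcases hr with ⟨a, ha, r', hr', rfl⟩
    refine Fin.cases ?_ ?_ i
    · simpa using by omega
    · intro j; simpa using ih hr' j

end GraphCFAux
/-! ### The backwards translation of formulas -/

namespace GraphCFAux

open CMSO

variable {R R' : RSig}

section Translate

variable (Θ₁ : TScheme R R')

/-- Code of the `i`-th slice of the second-order variable `X`. -/
def encM (X : ℕ) (i : Fin Θ₁.k) : ℕ := 2 * (X * Θ₁.k + i.1) + 1

lemma encM_ne_even (X : ℕ) (i : Fin Θ₁.k) (n : ℕ) : encM Θ₁ X i ≠ 2 * n := by
  unfold encM; omega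

lemma encM_inj {X Y : ℕ} {i j : Fin Θ₁.k} (h : encM Θ₁ X i = encM Θ₁ Y j) :
    X = Y ∧ i = j := by
  unfold encM at h
  have hk : 0 < Θ₁.k := i.pos
  have h' : X * Θ₁.k + i.1 = Y * Θ₁.k + j.1 := by omega
  have e1 : (X * Θ₁.k + i.1) / Θ₁.k = X := by
    rw [Nat.mul_comm X, Nat.mul_add_div hk, Nat.div_eq_of_lt i.isLt, Nat.add_zero]
  have e2 : (Y * Θ₁.k + j.1) / Θ₁.k = Y := by
    rw [Nat.mul_comm Y, Nat.mul_add_div hk, Nat.div_eq_of_lt j.isLt, Nat.add_zero]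
  have hXY : X = Y := by rw [← e1, ← e2, h']
  refine ⟨hXY, Fin.ext ?_⟩
  subst hXY
  omega

/-- The fresh second-order variable used in the translation of cardinality
constraints on `X`. -/
def freshSO (X : ℕ) : ℕ := 2 * Θ₁.k * (X + 1) + 1

lemma encM_ne_freshSO (X : ℕ) (i : Fin Θ₁.k) : encM Θ₁ X i ≠ freshSO Θ₁ X := by
  have : X * Θ₁.k + i.1 < Θ₁.k * (X + 1) := by
    have := i.isLt
    have : X * Θ₁.k + i.1 < X * Θ₁.k + Θ₁.k := by omega
    calc X * Θ₁.k + i.1 < X * Θ₁.k + Θ₁.k := this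
    _ = Θ₁.k * (X + 1) := by ring
  have h2 : 2 * Θ₁.k * (X + 1) = 2 * (Θ₁.k * (X + 1)) := by ring
  unfold encM freshSO
  omega

lemma freshSO_ne_even (X n : ℕ) : freshSO Θ₁ X ≠ 2 * n := by
  have h2 : 2 * Θ₁.k * (X + 1) = 2 * (Θ₁.k * (X + 1)) := by ring
  unfold freshSO; omega

/-- `guard A args θ`: holds at `(s1, s2)` iff `θ` holds (with parameters the
even part of `s2`) for every first-order store pinned to `s1 ∘ args` on
`0, …, A-1`. -/
def guard (A : ℕ) (args : Fin A → ℕ) (θ : CMSO R) : CMSO R :=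
  let B := max (fb θ) A
  let C := (Finset.univ.sup args) + B + 1
  bigAll ((List.range (B + 1)).map (· + C))
    (CMSO.imp (bigAnd (List.ofFn fun j : Fin A => CMSO.eq (j.1 + C) (args j)))
      (rename (· + C) (2 * ·) θ))

omit Θ₁ in
lemma guard_sem {S : Struc R} (A : ℕ) (args : Fin A → ℕ) (θ : CMSO R)
    (s1 : ℕ → S.U) (s2 : ℕ → Set S.U) :
    Sat S s1 s2 (guard A args θ) ↔
      ∀ t1 : ℕ → S.U, (∀ j : Fin A, t1 j.1 = s1 (args j)) →
        Sat S t1 (fun n => s2 (2 * n)) θ := by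
  set B := max (fb θ) A with hB
  set C := (Finset.univ.sup args) + B + 1 with hC
  have hargsC : ∀ j : Fin A, args j < C := by
    intro j
    have h1 : args j ≤ Finset.univ.sup args := Finset.le_sup (Finset.mem_univ j)
    omega
  have hinjF : Function.Injective (· + C) := fun a b h => by
    simp only at h; omega
  have hinjS : Function.Injective (2 * ·) := fun a b h => by
    simp only at h; omega
  have hmemL : ∀ y, y ∈ (List.range (B + 1)).map (· + C) ↔ (C ≤ y ∧ y ≤ C + B) := by
    intro y
    simp only [List.mem_map, List.mem_range]
    constructor
    · rintro ⟨d, hd, rfl⟩; omega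
    · intro h; exact ⟨y - C, by omega, by omega⟩
  rw [show guard A args θ = bigAll ((List.range (B + 1)).map (· + C))
    (CMSO.imp (bigAnd (List.ofFn fun j : Fin A => CMSO.eq (j.1 + C) (args j)))
      (rename (· + C) (2 * ·) θ)) from rfl]
  rw [sat_bigAll]
  constructor
  · intro h t1 hpin
    set t1' : ℕ → S.U := fun y => if C ≤ y ∧ y ≤ C + B then t1 (y - C) else s1 y with ht1'
    have hoff : ∀ y, y ∉ (List.range (B + 1)).map (· + C) → t1' y = s1 y := by
      intro y hy
      rw [hmemL] at hy
      simp only [ht1', if_neg hy]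
    have h2 := h t1' hoff
    rw [sat_imp] at h2
    have hpre : Sat S t1' s2 (bigAnd (List.ofFn fun j : Fin A => CMSO.eq (j.1 + C) (args j))) := by
      rw [sat_bigAnd]
      intro ψ hψ
      rw [List.mem_ofFn] at hψ
      rcases hψ with ⟨j, rfl⟩
      show t1' (j.1 + C) = t1' (args j)
      have hj : j.1 < A := j.isLt
      have e1 : t1' (j.1 + C) = t1 j.1 := by
        simp only [ht1']
        rw [if_pos (by omega)]
        congr 1
        omega
      have e2 : t1' (args j) = s1 (args j) := by
        have hlt := hargsC j
        simp only [ht1']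
        rw [if_neg (by omega)]
      rw [e1, e2, hpin j]
    have h3 := h2 hpre
    rw [sat_rename hinjF hinjS] at h3
    refine (sat_congrFO (fun x hx => ?_)).mp h3
    have hxB : x < B + 1 := lt_of_lt_of_le (lt_fb hx) (by omega)
    show t1' (x + C) = t1 x
    simp only [ht1']
    rw [if_pos (by omega)]
    congr 1
    omega
  · intro h t1 hoff
    rw [sat_imp]
    intro hpre
    rw [sat_bigAnd] at hpre
    rw [sat_rename hinjF hinjS]
    refine h (fun x => t1 (x + C)) fun j => ?_
    have hp := hpre (CMSO.eq (j.1 + C) (args j)) (by rw [List.mem_ofFn]; exact ⟨j, rfl⟩)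
    have he : t1 (j.1 + C) = t1 (args j) := hp
    have hargs : t1 (args j) = s1 (args j) := hoff (args j) (by
      rw [hmemL]; have := hargsC j; omega)
    show t1 (j.1 + C) = s1 (args j)
    rw [he, hargs]

/-- Guard expressing that the element denoted by variable `x` survives in
copy `i` of the intermediate structure. -/
def univGuard (i : Fin Θ₁.k) (x : ℕ) : CMSO R := guard 1 (fun _ => x) (Θ₁.univ i)

/-- Survival of an element in copy `i` of the intermediate structure. -/
def Surv (S : Struc R) (P₁ : ℕ → Set S.U) (u : S.U) (i : Fin Θ₁.k) : Prop :=
  ∀ t1 : ℕ → S.U, Sat S (Function.update t1 0 u) P₁ (Θ₁.univ i)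

lemma univGuard_sem {S : Struc R} {P₁ : ℕ → Set S.U} (i : Fin Θ₁.k) (x : ℕ)
    {s1 : ℕ → S.U} {s2 : ℕ → Set S.U} (hE : ∀ n, s2 (2 * n) = P₁ n) :
    Sat S s1 s2 (univGuard Θ₁ i x) ↔ Surv Θ₁ S P₁ (s1 x) i := by
  have hP : (fun n => s2 (2 * n)) = P₁ := funext hE
  rw [univGuard, guard_sem, hP]
  constructor
  · intro h t1
    exact h (Function.update t1 0 (s1 x)) (fun j => by
      have : j.1 = 0 := by omega
      rw [this]; simp)
  · intro h t1 hpin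
    have h0 : t1 0 = s1 x := hpin ⟨0, Nat.one_pos⟩
    have := h t1
    rwa [← h0, Function.update_eq_self] at this

/-- Emptiness of the intermediate structure. -/
def emptyM : CMSO R :=
  .not (.exFO 0 (bigOr ((List.finRange Θ₁.k).map fun i => univGuard Θ₁ i 0)))

lemma emptyM_sem {S : Struc R} {P₁ : ℕ → Set S.U} {s1 : ℕ → S.U} {s2 : ℕ → Set S.U}
    (hE : ∀ n, s2 (2 * n) = P₁ n) :
    Sat S s1 s2 (emptyM Θ₁) ↔ ∀ (u : S.U) (i : Fin Θ₁.k), ¬ Surv Θ₁ S P₁ u i := by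
  rw [emptyM, sat_not]
  rw [show Sat S s1 s2 (.exFO 0 (bigOr ((List.finRange Θ₁.k).map fun i => univGuard Θ₁ i 0)))
    ↔ ∃ u : S.U, Sat S (Function.update s1 0 u) s2
      (bigOr ((List.finRange Θ₁.k).map fun i => univGuard Θ₁ i 0)) from Iff.rfl]
  push_neg
  refine forall_congr' fun u => ?_
  rw [sat_bigOr]
  constructor
  · intro h i hS
    exact h ⟨univGuard Θ₁ i 0, List.mem_map.mpr ⟨i, List.mem_finRange i, rfl⟩, by
      rw [univGuard_sem Θ₁ i 0 hE]
      simpa using hS⟩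
  · rintro h ⟨ψ, hψ, hsat⟩
    rcases List.mem_map.mp hψ with ⟨i, _, rfl⟩
    rw [univGuard_sem Θ₁ i 0 hE] at hsat
    simp only [Function.update_self] at hsat
    exact h i hsat

/-- Boolean test for `∃ k, n = k * q + p`. -/
def condB (q p n : ℕ) : Bool :=
  if q = 0 then n == p else (n % q == p % q) && decide (p ≤ n)

lemma condB_iff (q p n : ℕ) : condB q p n = true ↔ ∃ k, n = k * q + p := by
  unfold condB
  rcases Nat.eq_zero_or_pos q with rfl | hq
  · rw [if_pos rfl, beq_iff_eq]
    constructor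
    · rintro rfl; exact ⟨0, by omega⟩
    · rintro ⟨k, hk⟩; omega
  · rw [if_neg (by omega), exists_mul_add_iff hq]
    simp

/-- Translation of the cardinality constraint `|X| ≡ p (mod q)`:
the `i`-th summand, with prescribed residue `ri`. -/
def restrCard (X : ℕ) (i : Fin Θ₁.k) (q ri : ℕ) : CMSO R :=
  .exSO (freshSO Θ₁ X) (.and
    (CMSO.all 0 (CMSO.iff (.mem (freshSO Θ₁ X) 0)
      (.and (.mem (encM Θ₁ X i) 0) (univGuard Θ₁ i 0))))
    (.card (freshSO Θ₁ X) q ri))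

/-- Translation of the cardinality constraint `|X| ≡ p (mod q)`. -/
def cardT (X q p : ℕ) : CMSO R :=
  bigOr (((allTuples (p + Θ₁.k * q + q) Θ₁.k).filter
      (fun r => condB q p (∑ i, r i))).map
    (fun r => bigAnd ((List.finRange Θ₁.k).map fun i => restrCard Θ₁ X i q (r i))))

/-- The backwards translation of a formula over `R'` to a formula over `R`,
given an assignment `c` of copies to the first-order variables. -/
def trL (c : ℕ → Fin Θ₁.k) : CMSO R' → CMSO R
  | .eq x y => if c x = c y then .eq x y else CMSO.ff
  | .rel r xs => guard (R'.arity r) xs (Θ₁.rel r fun j => c (xs j))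
  | .mem X x => .mem (encM Θ₁ X (c x)) x
  | .card X q p => cardT Θ₁ X q p
  | .not φ => .not (trL c φ)
  | .and φ ψ => .and (trL c φ) (trL c ψ)
  | .exFO x φ => bigOr ((List.finRange Θ₁.k).map fun i =>
      .exFO x (.and (univGuard Θ₁ i x) (trL (Function.update c x i) φ)))
  | .exSO X φ => bigExSO ((List.finRange Θ₁.k).map (encM Θ₁ X)) (trL c φ)

end Translate

end GraphCFAux
/-! ### Free variables of the translation -/

namespace GraphCFAux

open CMSO

variable {R R' : RSig}

lemma free_ff : freeFO (CMSO.ff : CMSO R) = {0} := by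
  show ({0, 0} : Finset ℕ) = {0}
  simp

lemma free_or (φ ψ : CMSO R) : freeFO (φ.or ψ) = freeFO φ ∪ freeFO ψ := rfl

lemma free_imp (φ ψ : CMSO R) : freeFO (φ.imp ψ) = freeFO φ ∪ freeFO ψ := rfl

lemma free_all (x : ℕ) (φ : CMSO R) : freeFO (CMSO.all x φ) = (freeFO φ).erase x := rfl

lemma mem_free_bigAnd {y : ℕ} {l : List (CMSO R)} (h : y ∈ freeFO (bigAnd l)) :
    y = 0 ∨ ∃ φ ∈ l, y ∈ freeFO φ := by
  induction l with
  | nil =>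
    left
    have : freeFO (bigAnd ([] : List (CMSO R))) = {0, 0} := rfl
    rw [this] at h; simpa using h
  | cons a l ih =>
    have : freeFO (bigAnd (a :: l)) = freeFO a ∪ freeFO (bigAnd l) := rfl
    rw [this, Finset.mem_union] at h
    rcases h with h | h
    · exact Or.inr ⟨a, by simp, h⟩
    · rcases ih h with h | ⟨φ, hφ, hy⟩
      · exact Or.inl h
      · exact Or.inr ⟨φ, by simp [hφ], hy⟩

lemma mem_free_bigOr {y : ℕ} {l : List (CMSO R)} (h : y ∈ freeFO (bigOr l)) :
    y = 0 ∨ ∃ φ ∈ l, y ∈ freeFO φ := by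
  induction l with
  | nil =>
    left
    have : freeFO (bigOr ([] : List (CMSO R))) = {0, 0} := rfl
    rw [this] at h; simpa using h
  | cons a l ih =>
    have : freeFO (bigOr (a :: l)) = freeFO a ∪ freeFO (bigOr l) := rfl
    rw [this, Finset.mem_union] at h
    rcases h with h | h
    · exact Or.inr ⟨a, by simp, h⟩
    · rcases ih h with h | ⟨φ, hφ, hy⟩
      · exact Or.inl h
      · exact Or.inr ⟨φ, by simp [hφ], hy⟩

lemma free_bigExSO (l : List ℕ) (φ : CMSO R) : freeFO (bigExSO l φ) = freeFO φ := by
  induction l with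
  | nil => rfl
  | cons a l ih => exact ih

lemma mem_free_bigAll {y : ℕ} {l : List ℕ} {φ : CMSO R} (h : y ∈ freeFO (bigAll l φ)) :
    y ∈ freeFO φ ∧ y ∉ l := by
  induction l with
  | nil => exact ⟨h, by simp⟩
  | cons a l ih =>
    have : freeFO (bigAll (a :: l) φ) = (freeFO (bigAll l φ)).erase a := rfl
    rw [this, Finset.mem_erase] at h
    rcases ih h.2 with ⟨h1, h2⟩
    exact ⟨h1, by simp [h.1, h2]⟩

lemma mem_free_rename {fF fS : ℕ → ℕ} {φ : CMSO R} {y : ℕ}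
    (h : y ∈ freeFO (rename fF fS φ)) : ∃ z ∈ freeFO φ, y = fF z := by
  induction φ with
  | eq x y' =>
    simp only [rename, freeFO, Finset.mem_insert, Finset.mem_singleton] at h ⊢
    rcases h with rfl | rfl
    · exact ⟨x, Or.inl rfl, rfl⟩
    · exact ⟨y', Or.inr rfl, rfl⟩
  | rel r xs =>
    simp only [rename, freeFO, Finset.mem_image, Finset.mem_univ] at h ⊢
    rcases h with ⟨j, _, rfl⟩
    exact ⟨xs j, ⟨j, by simp⟩, rfl⟩
  | mem X x =>
    simp only [rename, freeFO, Finset.mem_singleton] at h ⊢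
    exact ⟨x, rfl, h⟩
  | card X q p => simp [rename, freeFO] at h
  | not φ ih => exact ih h
  | and φ ψ ihφ ihψ =>
    simp only [rename, freeFO, Finset.mem_union] at h ⊢
    rcases h with h | h
    · rcases ihφ h with ⟨z, hz, rfl⟩; exact ⟨z, Or.inl hz, rfl⟩
    · rcases ihψ h with ⟨z, hz, rfl⟩; exact ⟨z, Or.inr hz, rfl⟩
  | exFO x φ ih =>
    simp only [rename, freeFO, Finset.mem_erase] at h ⊢
    rcases h with ⟨hne, h⟩
    rcases ih h with ⟨z, hz, rfl⟩
    exact ⟨z, ⟨fun hzx => hne (by rw [hzx]), hz⟩, rfl⟩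
  | exSO X φ ih => exact ih h

lemma mem_free_guard {A : ℕ} {args : Fin A → ℕ} {θ : CMSO R} {y : ℕ}
    (h : y ∈ freeFO (guard A args θ)) : y = 0 ∨ ∃ j, y = args j := by
  unfold guard at h
  set B := max (fb θ) A with hB
  set C := (Finset.univ.sup args) + B + 1 with hC
  rcases mem_free_bigAll h with ⟨h1, h2⟩
  rw [free_imp, Finset.mem_union] at h1
  have hmemL : ∀ d, d ≤ B → (d + C) ∈ (List.range (B + 1)).map (· + C) := by
    intro d hd
    simp only [List.mem_map, List.mem_range]
    exact ⟨d, by omega, rfl⟩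
  rcases h1 with h1 | h1
  · rcases mem_free_bigAnd h1 with rfl | ⟨ψ, hψ, hy⟩
    · exact Or.inl rfl
    · rw [List.mem_ofFn] at hψ
      rcases hψ with ⟨j, rfl⟩
      simp only [freeFO, Finset.mem_insert, Finset.mem_singleton] at hy
      rcases hy with rfl | rfl
      · exact absurd (hmemL j.1 (by have := j.isLt; omega)) h2
      · exact Or.inr ⟨j, rfl⟩
  · rcases mem_free_rename h1 with ⟨z, hz, rfl⟩
    have hzB : z ≤ B := by have := lt_fb hz; omega
    exact absurd (hmemL z hzB) (by simpa using h2)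

lemma mem_free_univGuard {Θ₁ : TScheme R R'} {i : Fin Θ₁.k} {x y : ℕ}
    (h : y ∈ freeFO (univGuard Θ₁ i x)) : y = 0 ∨ y = x := by
  rcases mem_free_guard h with h | ⟨j, rfl⟩
  · exact Or.inl h
  · exact Or.inr rfl

lemma mem_free_restrCard {Θ₁ : TScheme R R'} {X : ℕ} {i : Fin Θ₁.k} {q ri y : ℕ}
    (h : y ∈ freeFO (restrCard Θ₁ X i q ri)) : y = 0 := by
  have hU : ∀ z ∈ freeFO (univGuard Θ₁ i (0 : ℕ)), z = 0 := fun z hz => by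
    rcases mem_free_univGuard hz with h' | h' <;> exact h'
  simp only [restrCard, CMSO.iff, CMSO.imp, CMSO.all, freeFO, Finset.union_empty,
    Finset.mem_union, Finset.mem_erase, Finset.mem_insert, Finset.mem_singleton] at h
  have := hU y
  tauto

lemma mem_free_cardT {Θ₁ : TScheme R R'} {X q p y : ℕ}
    (h : y ∈ freeFO (cardT Θ₁ X q p)) : y = 0 := by
  unfold cardT at h
  rcases mem_free_bigOr h with rfl | ⟨ψ, hψ, hy⟩
  · rfl
  · rw [List.mem_map] at hψ
    rcases hψ with ⟨r, _, rfl⟩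
    rcases mem_free_bigAnd hy with rfl | ⟨ψ', hψ', hy'⟩
    · rfl
    · rw [List.mem_map] at hψ'
      rcases hψ' with ⟨i, _, rfl⟩
      exact mem_free_restrCard hy'

lemma mem_free_trL {Θ₁ : TScheme R R'} {φ : CMSO R'} {c : ℕ → Fin Θ₁.k} {y : ℕ}
    (h : y ∈ freeFO (trL Θ₁ c φ)) : y = 0 ∨ y ∈ freeFO φ := by
  induction φ generalizing c with
  | eq x y' =>
    rw [show trL Θ₁ c (.eq x y') = if c x = c y' then .eq x y' else CMSO.ff from rfl] at h
    split at h
    · exact Or.inr h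
    · rw [free_ff] at h; simp at h; exact Or.inl h
  | rel r xs =>
    rcases mem_free_guard h with h | ⟨j, rfl⟩
    · exact Or.inl h
    · exact Or.inr (by simp [freeFO])
  | mem X x => exact Or.inr h
  | card X q p => exact Or.inl (mem_free_cardT h)
  | not φ ih => exact ih h
  | and φ ψ ihφ ihψ =>
    rw [show freeFO (trL Θ₁ c (.and φ ψ)) = freeFO (trL Θ₁ c φ) ∪ freeFO (trL Θ₁ c ψ)
      from rfl, Finset.mem_union] at h
    rcases h with h | h
    · rcases ihφ h with h | h
      · exact Or.inl h
      · exact Or.inr (by simp [freeFO, h])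
    · rcases ihψ h with h | h
      · exact Or.inl h
      · exact Or.inr (by simp [freeFO, h])
  | exFO x φ ih =>
    rcases mem_free_bigOr h with rfl | ⟨ψ, hψ, hy⟩
    · exact Or.inl rfl
    · rw [List.mem_map] at hψ
      rcases hψ with ⟨i, _, rfl⟩
      rw [show freeFO (CMSO.exFO x ((univGuard Θ₁ i x).and
          (trL Θ₁ (Function.update c x i) φ))) =
        ((freeFO (univGuard Θ₁ i x) ∪ freeFO (trL Θ₁ (Function.update c x i) φ)).erase x)
        from rfl, Finset.mem_erase, Finset.mem_union] at hy
      rcases hy with ⟨hne, hy | hy⟩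
      · rcases mem_free_univGuard hy with h | h
        · exact Or.inl h
        · exact absurd h hne
      · rcases ih hy with h | h
        · exact Or.inl h
        · exact Or.inr (by simp [freeFO, Finset.mem_erase, hne, h])
  | exSO X φ ih =>
    rw [show trL Θ₁ c (.exSO X φ) =
      bigExSO ((List.finRange Θ₁.k).map (encM Θ₁ X)) (trL Θ₁ c φ) from rfl,
      free_bigExSO] at h
    exact ih h

lemma trL_congr {Θ₁ : TScheme R R'} {φ : CMSO R'} {c c' : ℕ → Fin Θ₁.k}
    (h : ∀ x ∈ freeFO φ, c x = c' x) : trL Θ₁ c φ = trL Θ₁ c' φ := by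
  induction φ generalizing c c' with
  | eq x y =>
    show (if c x = c y then _ else _) = (if c' x = c' y then _ else _)
    rw [h x (by simp [freeFO]), h y (by simp [freeFO])]
  | rel r xs =>
    show guard _ _ _ = guard _ _ _
    have : (fun j => c (xs j)) = (fun j => c' (xs j)) :=
      funext fun j => h (xs j) (by simp [freeFO])
    rw [this]
  | mem X x =>
    show CMSO.mem (encM Θ₁ X (c x)) x = CMSO.mem (encM Θ₁ X (c' x)) x
    rw [h x (by simp [freeFO])]
  | card X q p => rfl
  | not φ ih =>
    show CMSO.not _ = CMSO.not _
    rw [ih h]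
  | and φ ψ ihφ ihψ =>
    show CMSO.and _ _ = CMSO.and _ _
    rw [ihφ (fun x hx => h x (by simp [freeFO, hx])),
      ihψ (fun x hx => h x (by simp [freeFO, hx]))]
  | exFO x φ ih =>
    show bigOr _ = bigOr _
    congr 1
    refine List.map_congr_left fun i _ => ?_
    have : trL Θ₁ (Function.update c x i) φ = trL Θ₁ (Function.update c' x i) φ := by
      refine ih fun y hy => ?_
      rcases eq_or_ne y x with rfl | hyx
      · simp
      · rw [Function.update_of_ne hyx, Function.update_of_ne hyx]
        exact h y (by simp [freeFO, Finset.mem_erase, hyx, hy])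
    rw [this]
  | exSO X φ ih =>
    show bigExSO _ _ = bigExSO _ _
    rw [ih h]

end GraphCFAux
/-! ### Semantics of the backwards translation -/

namespace GraphCFAux

open CMSO

variable {R R' : RSig} (Θ₁ : TScheme R R') (S : Struc R) (P₁ : ℕ → Set S.U)

lemma restrCard_sem (X : ℕ) (i : Fin Θ₁.k) (q ri : ℕ) {s1 : ℕ → S.U}
    {s2 : ℕ → Set S.U} (hE : ∀ n, s2 (2 * n) = P₁ n) :
    Sat S s1 s2 (restrCard Θ₁ X i q ri) ↔
      ∃ k, Nat.card ↥{u : S.U | u ∈ s2 (encM Θ₁ X i) ∧ Surv Θ₁ S P₁ u i} = k * q + ri := by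
  show (∃ V : Set S.U, Sat S s1 (Function.update s2 (freshSO Θ₁ X) V) _) ↔ _
  constructor
  · rintro ⟨V, hall, hcard⟩
    have hVeq : V = {u : S.U | u ∈ s2 (encM Θ₁ X i) ∧ Surv Θ₁ S P₁ u i} := by
      ext u
      have h2 := (sat_all).mp hall u
      rw [sat_iff] at h2
      have hmem1 : Sat S (Function.update s1 0 u)
          (Function.update s2 (freshSO Θ₁ X) V) (.mem (freshSO Θ₁ X) 0) ↔ u ∈ V := by
        show Function.update s1 0 u 0 ∈ _ ↔ _
        rw [Function.update_self, Function.update_self]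
      have hmem2 : Sat S (Function.update s1 0 u)
          (Function.update s2 (freshSO Θ₁ X) V) (.mem (encM Θ₁ X i) 0) ↔
          u ∈ s2 (encM Θ₁ X i) := by
        show Function.update s1 0 u 0 ∈ _ ↔ _
        rw [Function.update_self, Function.update_of_ne (encM_ne_freshSO Θ₁ X i)]
      have hE' : ∀ n, Function.update s2 (freshSO Θ₁ X) V (2 * n) = P₁ n := fun n => by
        rw [Function.update_of_ne (Ne.symm (freshSO_ne_even Θ₁ X n))]; exact hE n
      rw [sat_and, hmem1, hmem2, univGuard_sem Θ₁ i 0 hE', Function.update_self] at h2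
      exact h2
    have hc : Sat S s1 (Function.update s2 (freshSO Θ₁ X) V) (.card (freshSO Θ₁ X) q ri) :=
      hcard
    rcases hc with ⟨k, hk⟩
    rw [Function.update_self] at hk
    exact ⟨k, by rw [← hVeq]; exact hk⟩
  · rintro ⟨k, hk⟩
    refine ⟨{u : S.U | u ∈ s2 (encM Θ₁ X i) ∧ Surv Θ₁ S P₁ u i}, ?_, ⟨k, ?_⟩⟩
    · rw [sat_all]
      intro u
      rw [sat_iff]
      have hE' : ∀ n, Function.update s2 (freshSO Θ₁ X)
          {u : S.U | u ∈ s2 (encM Θ₁ X i) ∧ Surv Θ₁ S P₁ u i} (2 * n) = P₁ n := fun n => by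
        rw [Function.update_of_ne (Ne.symm (freshSO_ne_even Θ₁ X n))]; exact hE n
      rw [show Sat S (Function.update s1 0 u) _ (.mem (freshSO Θ₁ X) 0) ↔
          Function.update s1 0 u 0 ∈ Function.update s2 (freshSO Θ₁ X)
            {u : S.U | u ∈ s2 (encM Θ₁ X i) ∧ Surv Θ₁ S P₁ u i} (freshSO Θ₁ X) from Iff.rfl]
      rw [sat_and, univGuard_sem Θ₁ i 0 hE']
      rw [show Sat S (Function.update s1 0 u) _ (.mem (encM Θ₁ X i) 0) ↔
          Function.update s1 0 u 0 ∈ Function.update s2 (freshSO Θ₁ X)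
            {u : S.U | u ∈ s2 (encM Θ₁ X i) ∧ Surv Θ₁ S P₁ u i} (encM Θ₁ X i) from Iff.rfl]
      rw [Function.update_self, Function.update_self,
        Function.update_of_ne (encM_ne_freshSO Θ₁ X i)]
      exact Iff.rfl
    · show Nat.card ↥(Function.update s2 (freshSO Θ₁ X) _ (freshSO Θ₁ X)) = _
      rw [Function.update_self]
      exact hk

lemma card_decomp (X : ℕ) (s2 : ℕ → Set S.U) (s2' : ℕ → Set (TOut Θ₁ S P₁).U)
    (hC : ∀ n (m : (TOut Θ₁ S P₁).U), m ∈ s2' n ↔ m.1.1 ∈ s2 (encM Θ₁ n m.1.2)) :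
    Nat.card ↥(s2' X) =
      ∑ i, Nat.card ↥{u : S.U | u ∈ s2 (encM Θ₁ X i) ∧ Surv Θ₁ S P₁ u i} := by
  have := S.finU
  have e : ↥(s2' X) ≃ Σ i : Fin Θ₁.k,
      ↥{u : S.U | u ∈ s2 (encM Θ₁ X i) ∧ Surv Θ₁ S P₁ u i} :=
    { toFun := fun m => ⟨m.1.1.2, ⟨m.1.1.1, (hC X m.1).mp m.2, m.1.2⟩⟩
      invFun := fun x => ⟨⟨(x.2.1, x.1), x.2.2.2⟩, (hC X ⟨(x.2.1, x.1), x.2.2.2⟩).mpr x.2.2.1⟩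
      left_inv := fun m => by
        apply Subtype.ext; apply Subtype.ext; exact Prod.mk.eta
      right_inv := fun x => rfl }
  rw [Nat.card_congr e, nat_card_sigma]

lemma trL_sem (φ : CMSO R') (c : ℕ → Fin Θ₁.k) (s1 : ℕ → S.U) (s2 : ℕ → Set S.U)
    (s1' : ℕ → (TOut Θ₁ S P₁).U) (s2' : ℕ → Set (TOut Θ₁ S P₁).U)
    (h1 : ∀ x, (s1' x).1 = (s1 x, c x))
    (hE : ∀ n, s2 (2 * n) = P₁ n)
    (hC : ∀ n (m : (TOut Θ₁ S P₁).U), m ∈ s2' n ↔ m.1.1 ∈ s2 (encM Θ₁ n m.1.2)) :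
    Sat S s1 s2 (trL Θ₁ c φ) ↔ Sat (TOut Θ₁ S P₁) s1' s2' φ := by
  induction φ generalizing c s1 s2 s1' s2' with
  | eq x y =>
    show Sat S s1 s2 (if c x = c y then CMSO.eq x y else CMSO.ff) ↔ s1' x = s1' y
    rw [show s1' x = s1' y ↔ (s1' x).1 = (s1' y).1 from Subtype.ext_iff, h1 x, h1 y, Prod.ext_iff]
    by_cases hcc : c x = c y
    · rw [if_pos hcc]
      show s1 x = s1 y ↔ _
      simp [hcc]
    · rw [if_neg hcc]
      constructor
      · intro h; exact absurd h (sat_ff _ _)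
      · rintro ⟨_, h2⟩; exact absurd h2 hcc
  | rel r xs =>
    show Sat S s1 s2 (guard (R'.arity r) xs (Θ₁.rel r fun j => c (xs j))) ↔
      (TOut Θ₁ S P₁).rel r (fun j => s1' (xs j))
    rw [guard_sem]
    have hP : (fun n => s2 (2 * n)) = P₁ := funext hE
    rw [hP]
    show _ ↔ ∀ t1 : ℕ → S.U, (∀ j, t1 j.1 = ((s1' (xs j)).1).1) →
      Sat S t1 P₁ (Θ₁.rel r fun j => ((s1' (xs j)).1).2)
    have e2 : (fun j => ((s1' (xs j)).1).2) = fun j => c (xs j) :=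
      funext fun j => by rw [h1 (xs j)]
    rw [e2]
    refine forall_congr' fun t1 => imp_congr (forall_congr' fun j => ?_) Iff.rfl
    rw [h1 (xs j)]
  | mem X x =>
    show s1 x ∈ s2 (encM Θ₁ X (c x)) ↔ s1' x ∈ s2' X
    have h := hC X (s1' x)
    rw [h1 x] at h
    exact h.symm
  | card X q p =>
    show Sat S s1 s2 (cardT Θ₁ X q p) ↔ ∃ k, Nat.card ↥(s2' X) = k * q + p
    rw [card_decomp Θ₁ S P₁ X s2 s2' hC,
      card_split Θ₁.k q p (fun i => Nat.card ↥{u : S.U | u ∈ s2 (encM Θ₁ X i) ∧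
        Surv Θ₁ S P₁ u i})]
    unfold cardT
    rw [sat_bigOr]
    constructor
    · rintro ⟨ψ, hψ, hsat⟩
      rw [List.mem_map] at hψ
      rcases hψ with ⟨r, hr, rfl⟩
      rw [List.mem_filter] at hr
      refine ⟨r, allTuples_bounded hr.1, (condB_iff _ _ _).mp hr.2, fun i => ?_⟩
      rw [sat_bigAnd] at hsat
      have := hsat (restrCard Θ₁ X i q (r i))
        (List.mem_map.mpr ⟨i, List.mem_finRange i, rfl⟩)
      exact (restrCard_sem Θ₁ S P₁ X i q (r i) hE).mp this
    · rintro ⟨r, hbound, hcond, hper⟩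
      refine ⟨bigAnd ((List.finRange Θ₁.k).map fun i => restrCard Θ₁ X i q (r i)),
        List.mem_map.mpr ⟨r, List.mem_filter.mpr
          ⟨mem_allTuples r hbound, (condB_iff _ _ _).mpr hcond⟩, rfl⟩, ?_⟩
      rw [sat_bigAnd]
      intro ψ hψ
      rcases List.mem_map.mp hψ with ⟨i, _, rfl⟩
      exact (restrCard_sem Θ₁ S P₁ X i q (r i) hE).mpr (hper i)
  | not φ ih => exact not_congr (ih c s1 s2 s1' s2' h1 hE hC)
  | and φ ψ ihφ ihψ =>
    exact and_congr (ihφ c s1 s2 s1' s2' h1 hE hC) (ihψ c s1 s2 s1' s2' h1 hE hC)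
  | exFO x φ ih =>
    show Sat S s1 s2 (bigOr ((List.finRange Θ₁.k).map fun i =>
        .exFO x (.and (univGuard Θ₁ i x) (trL Θ₁ (Function.update c x i) φ)))) ↔
      ∃ u' : (TOut Θ₁ S P₁).U, Sat (TOut Θ₁ S P₁) (Function.update s1' x u') s2' φ
    rw [sat_bigOr]
    constructor
    · rintro ⟨ψ, hψ, hsat⟩
      rcases List.mem_map.mp hψ with ⟨i, _, rfl⟩
      rcases hsat with ⟨u, hg, hφ⟩
      rw [univGuard_sem Θ₁ i x hE, Function.update_self] at hg
      refine ⟨⟨(u, i), hg⟩, ?_⟩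
      refine (ih (Function.update c x i) (Function.update s1 x u) s2
        (Function.update s1' x ⟨(u, i), hg⟩) s2' (fun y => ?_) hE hC).mp hφ
      rcases eq_or_ne y x with rfl | hyx
      · rw [Function.update_self, Function.update_self]
        exact congrArg Subtype.val (Function.update_self _ _ s1')
      · rw [Function.update_of_ne hyx, Function.update_of_ne hyx]
        exact (congrArg Subtype.val (Function.update_of_ne hyx _ s1')).trans (h1 y)
    · rintro ⟨u', hu'⟩
      have hSurv : Surv Θ₁ S P₁ u'.1.1 u'.1.2 := u'.2
      refine ⟨CMSO.exFO x (.and (univGuard Θ₁ u'.1.2 x)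
          (trL Θ₁ (Function.update c x u'.1.2) φ)),
        List.mem_map.mpr ⟨u'.1.2, List.mem_finRange _, rfl⟩, ?_⟩
      refine ⟨u'.1.1, ?_, ?_⟩
      · rw [univGuard_sem Θ₁ u'.1.2 x hE, Function.update_self]
        exact hSurv
      · have hval : (⟨(u'.1.1, u'.1.2), hSurv⟩ : (TOut Θ₁ S P₁).U) = u' :=
          Subtype.ext (Prod.mk.eta)
        refine (ih (Function.update c x u'.1.2) (Function.update s1 x u'.1.1) s2
          (Function.update s1' x u') s2' (fun y => ?_) hE hC).mpr hu'
        rcases eq_or_ne y x with rfl | hyx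
        · rw [Function.update_self, Function.update_self, Function.update_self]
        · rw [Function.update_of_ne hyx, Function.update_of_ne hyx,
            Function.update_of_ne hyx]
          exact h1 y
  | exSO X φ ih =>
    show Sat S s1 s2 (bigExSO ((List.finRange Θ₁.k).map (encM Θ₁ X)) (trL Θ₁ c φ)) ↔
      ∃ V : Set (TOut Θ₁ S P₁).U, Sat (TOut Θ₁ S P₁) s1' (Function.update s2' X V) φ
    rw [sat_bigExSO]
    constructor
    · rintro ⟨t2, ht2, hsat⟩
      have hEt : ∀ n, t2 (2 * n) = P₁ n := by
        intro n
        rw [ht2 (2 * n) (fun hmem => ?_), hE n]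
        rcases List.mem_map.mp hmem with ⟨i, _, hi⟩
        exact encM_ne_even Θ₁ X i n hi
      refine ⟨{m : (TOut Θ₁ S P₁).U | m.1.1 ∈ t2 (encM Θ₁ X m.1.2)}, ?_⟩
      refine (ih c s1 t2 s1' (Function.update s2' X
        {m : (TOut Θ₁ S P₁).U | m.1.1 ∈ t2 (encM Θ₁ X m.1.2)}) h1 hEt (fun n m => ?_)).mp hsat
      rcases eq_or_ne n X with rfl | hnX
      · rw [Function.update_self]
        exact Iff.rfl
      · rw [Function.update_of_ne hnX, hC n m,
          ht2 (encM Θ₁ n m.1.2) (fun hmem => ?_)]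
        rcases List.mem_map.mp hmem with ⟨i, _, hi⟩
        exact hnX ((encM_inj Θ₁ hi).1).symm
    · rintro ⟨V, hV⟩
      classical
      set t2 : ℕ → Set S.U := fun n =>
        if h : ∃ i : Fin Θ₁.k, n = encM Θ₁ X i then
          {u : S.U | ∃ m : (TOut Θ₁ S P₁).U, m.1 = (u, h.choose) ∧ m ∈ V}
        else s2 n with ht2def
      have hEt : ∀ n, t2 (2 * n) = P₁ n := by
        intro n
        have ht : t2 (2 * n) = s2 (2 * n) :=
          dif_neg (fun h => Exists.elim h (fun i hi => encM_ne_even Θ₁ X i n hi.symm))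
        rw [ht]; exact hE n
      refine ⟨t2, fun n hn => ?_, ?_⟩
      · exact dif_neg (fun h => Exists.elim h (fun i hi =>
          hn (List.mem_map.mpr ⟨i, List.mem_finRange i, hi.symm⟩)))
      · refine (ih c s1 t2 s1' (Function.update s2' X V) h1 hEt (fun n m => ?_)).mpr hV
        rcases eq_or_ne n X with rfl | hnX
        · rw [Function.update_self]
          have hex : ∃ i : Fin Θ₁.k, encM Θ₁ n m.1.2 = encM Θ₁ n i := ⟨m.1.2, rfl⟩
          have ht2v : t2 (encM Θ₁ n m.1.2) =
              {u : S.U | ∃ m' : (TOut Θ₁ S P₁).U, m'.1 = (u, hex.choose) ∧ m' ∈ V} :=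
            dif_pos hex
          have hch : hex.choose = m.1.2 := ((encM_inj Θ₁ hex.choose_spec).2).symm
          rw [ht2v]
          constructor
          · intro hm
            refine ⟨m, ?_, hm⟩
            rw [hch]
          · rintro ⟨m', hm', hm'V⟩
            have hmm : m' = m := by
              apply Subtype.ext
              rw [hm', hch]
            rwa [hmm] at hm'V
        · rw [Function.update_of_ne hnX, hC n m]
          have hne : ¬ ∃ i : Fin Θ₁.k, encM Θ₁ n m.1.2 = encM Θ₁ X i :=
            fun h => Exists.elim h (fun i hi => hnX (encM_inj Θ₁ hi).1)
          have ht : t2 (encM Θ₁ n m.1.2) = s2 (encM Θ₁ n m.1.2) := dif_neg hne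
          rw [ht]

end GraphCFAux
/-! ### Closing the remaining variables -/

namespace GraphCFAux

open CMSO

variable {R R' : RSig}

/-- Universally close the variables in `L` over the intermediate structure. -/
def Mclose (Θ₁ : TScheme R R') : List ℕ → (ℕ → Fin Θ₁.k) → CMSO R' → CMSO R
  | [], c, φ => trL Θ₁ c φ
  | x :: L, c, φ => CMSO.all x (bigAnd ((List.finRange Θ₁.k).map fun i =>
      (univGuard Θ₁ i x).imp (Mclose Θ₁ L (Function.update c x i) φ)))

/-- Variant that obtains the initial copy assignment from the first closed
variable (needed when `Θ₁.k` may be zero). -/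
def Mclose0 (Θ₁ : TScheme R R') : List ℕ → CMSO R' → CMSO R
  | [], _ => CMSO.tt
  | x :: L, φ => CMSO.all x (bigAnd ((List.finRange Θ₁.k).map fun i =>
      (univGuard Θ₁ i x).imp (Mclose Θ₁ L (fun _ => i) φ)))

variable (Θ₁ : TScheme R R') (S : Struc R) (P₁ : ℕ → Set S.U)

lemma Mclose_sem (N : ℕ) (hN0 : 0 < N) (φ : CMSO R') (hN : ∀ y ∈ freeFO φ, y < N)
    (L : List ℕ) (c : ℕ → Fin Θ₁.k) (s1 : ℕ → S.U) (s2 : ℕ → Set S.U)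
    (s2' : ℕ → Set (TOut Θ₁ S P₁).U)
    (hE : ∀ n, s2 (2 * n) = P₁ n)
    (hC : ∀ n (m : (TOut Θ₁ S P₁).U), m ∈ s2' n ↔ m.1.1 ∈ s2 (encM Θ₁ n m.1.2))
    (m₀ : (TOut Θ₁ S P₁).U)
    (hbase : ∀ x, x ∉ L → x < N → Surv Θ₁ S P₁ (s1 x) (c x)) :
    Sat S s1 s2 (Mclose Θ₁ L c φ) ↔
      ∀ s1' : ℕ → (TOut Θ₁ S P₁).U,
        (∀ x, x ∉ L → x < N → (s1' x).1 = (s1 x, c x)) →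
        Sat (TOut Θ₁ S P₁) s1' s2' φ := by
  classical
  induction L generalizing c s1 with
  | nil =>
    show Sat S s1 s2 (trL Θ₁ c φ) ↔ _
    set s1'0 : ℕ → (TOut Θ₁ S P₁).U := fun x =>
      if h : x < N then ⟨(s1 x, c x), hbase x (by simp) h⟩ else m₀ with hs1'0
    have hval : ∀ x, x < N → (s1'0 x).1 = (s1 x, c x) := by
      intro x hx
      have : s1'0 x = ⟨(s1 x, c x), hbase x (by simp) hx⟩ := dif_pos hx
      rw [this]
    set c' : ℕ → Fin Θ₁.k := fun x => (s1'0 x).1.2 with hc'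
    set t1 : ℕ → S.U := fun x => (s1'0 x).1.1 with ht1
    have hTeq : trL Θ₁ c φ = trL Θ₁ c' φ := by
      refine trL_congr fun x hx => ?_
      have h2 := hval x (hN x hx)
      show c x = (s1'0 x).1.2
      rw [h2]
    have hsat : Sat S s1 s2 (trL Θ₁ c' φ) ↔ Sat S t1 s2 (trL Θ₁ c' φ) := by
      refine sat_congrFO fun x hx => ?_
      have hx' : x < N := by
        rcases mem_free_trL hx with rfl | hx'
        · exact hN0
        · exact hN x hx'
      have h2 := hval x hx'
      show s1 x = (s1'0 x).1.1
      rw [h2]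
    have hT := trL_sem Θ₁ S P₁ φ c' t1 s2 s1'0 s2' (fun x => rfl) hE hC
    rw [hTeq, hsat, hT]
    constructor
    · intro h s1' hcon
      refine (sat_congrFO fun x hx => ?_).mp h
      have hx' : x < N := hN x hx
      apply Subtype.ext
      rw [hval x hx', hcon x (by simp) hx']
    · intro h
      exact h s1'0 fun x _ hx => hval x hx
  | cons x L ih =>
    show Sat S s1 s2 (CMSO.all x (bigAnd _)) ↔ _
    rw [sat_all]
    have step : ∀ u : S.U,
        Sat S (Function.update s1 x u) s2 (bigAnd ((List.finRange Θ₁.k).map fun i =>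
          (univGuard Θ₁ i x).imp (Mclose Θ₁ L (Function.update c x i) φ))) ↔
        ∀ i : Fin Θ₁.k, Surv Θ₁ S P₁ u i →
          Sat S (Function.update s1 x u) s2 (Mclose Θ₁ L (Function.update c x i) φ) := by
      intro u
      rw [sat_bigAnd]
      constructor
      · intro h i hS
        have h2 := h _ (List.mem_map.mpr ⟨i, List.mem_finRange i, rfl⟩)
        rw [sat_imp] at h2
        refine h2 ?_
        rw [univGuard_sem Θ₁ i x hE, Function.update_self]
        exact hS
      · intro h ψ hψ
        rcases List.mem_map.mp hψ with ⟨i, _, rfl⟩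
        rw [sat_imp, univGuard_sem Θ₁ i x hE, Function.update_self]
        exact h i
    constructor
    · intro h s1' hcon
      by_cases hx : x < N
      · have hS : Surv Θ₁ S P₁ (s1' x).1.1 (s1' x).1.2 := (s1' x).2
        have h2 := (step (s1' x).1.1).mp (h (s1' x).1.1) (s1' x).1.2 hS
        have h3 := (ih (Function.update c x (s1' x).1.2)
          (Function.update s1 x (s1' x).1.1) (fun y hy hy' => ?_)).mp h2
        · refine h3 s1' fun y hy hy' => ?_
          rcases eq_or_ne y x with rfl | hyx
          · rw [Function.update_self, Function.update_self]
          · rw [Function.update_of_ne hyx, Function.update_of_ne hyx]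
            exact hcon y (by simp [hy, hyx]) hy'
        · rcases eq_or_ne y x with rfl | hyx
          · rw [Function.update_self, Function.update_self]
            exact hS
          · rw [Function.update_of_ne hyx, Function.update_of_ne hyx]
            exact hbase y (by simp [hy, hyx]) hy'
      · have h2 := (step m₀.1.1).mp (h m₀.1.1) m₀.1.2 m₀.2
        have h3 := (ih (Function.update c x m₀.1.2)
          (Function.update s1 x m₀.1.1) (fun y hy hy' => ?_)).mp h2
        · refine h3 s1' fun y hy hy' => ?_
          have hyx : y ≠ x := fun hyx => hx (hyx ▸ hy')
          rw [Function.update_of_ne hyx, Function.update_of_ne hyx]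
          exact hcon y (by simp [hy, hyx]) hy'
        · have hyx : y ≠ x := fun hyx => hx (hyx ▸ hy')
          rw [Function.update_of_ne hyx, Function.update_of_ne hyx]
          exact hbase y (by simp [hy, hyx]) hy'
    · intro h u
      rw [step u]
      intro i hS
      refine (ih (Function.update c x i) (Function.update s1 x u)
        (fun y hy hy' => ?_)).mpr (fun s1' hcon => ?_)
      · rcases eq_or_ne y x with rfl | hyx
        · rw [Function.update_self, Function.update_self]
          exact hS
        · rw [Function.update_of_ne hyx, Function.update_of_ne hyx]
          exact hbase y (by simp [hy, hyx]) hy'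
      · refine h s1' fun y hy hy' => ?_
        have hyx : y ≠ x := fun hyx' => hy (by simp [hyx'])
        have := hcon y (fun hyL => hy (by simp [hyL])) hy'
        rwa [Function.update_of_ne hyx, Function.update_of_ne hyx] at this

lemma Mclose0_sem (N : ℕ) (hN0 : 0 < N) (φ : CMSO R') (hN : ∀ y ∈ freeFO φ, y < N)
    (s1 : ℕ → S.U) (s2 : ℕ → Set S.U) (s2' : ℕ → Set (TOut Θ₁ S P₁).U)
    (hE : ∀ n, s2 (2 * n) = P₁ n)
    (hC : ∀ n (m : (TOut Θ₁ S P₁).U), m ∈ s2' n ↔ m.1.1 ∈ s2 (encM Θ₁ n m.1.2))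
    (m₀ : (TOut Θ₁ S P₁).U) :
    Sat S s1 s2 (Mclose0 Θ₁ (List.range N) φ) ↔
      ∀ s1' : ℕ → (TOut Θ₁ S P₁).U, Sat (TOut Θ₁ S P₁) s1' s2' φ := by
  obtain ⟨N', rfl⟩ : ∃ N', N = N' + 1 := ⟨N - 1, by omega⟩
  rw [List.range_succ_eq_map]
  show Sat S s1 s2 (CMSO.all 0 (bigAnd _)) ↔ _
  rw [sat_all]
  have hmemL : ∀ y, y ∈ (List.range N').map Nat.succ ↔ (1 ≤ y ∧ y < N' + 1) := by
    intro y
    simp only [List.mem_map, List.mem_range]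
    constructor
    · rintro ⟨d, hd, rfl⟩; omega
    · intro hy; exact ⟨y - 1, by omega, by omega⟩
  have step : ∀ u : S.U,
      Sat S (Function.update s1 0 u) s2 (bigAnd ((List.finRange Θ₁.k).map fun i =>
        (univGuard Θ₁ i 0).imp (Mclose Θ₁ ((List.range N').map Nat.succ) (fun _ => i) φ))) ↔
      ∀ i : Fin Θ₁.k, Surv Θ₁ S P₁ u i →
        Sat S (Function.update s1 0 u) s2
          (Mclose Θ₁ ((List.range N').map Nat.succ) (fun _ => i) φ) := by
    intro u
    rw [sat_bigAnd]
    constructor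
    · intro h i hS
      have h2 := h _ (List.mem_map.mpr ⟨i, List.mem_finRange i, rfl⟩)
      rw [sat_imp] at h2
      refine h2 ?_
      rw [univGuard_sem Θ₁ i 0 hE, Function.update_self]
      exact hS
    · intro h ψ hψ
      rcases List.mem_map.mp hψ with ⟨i, _, rfl⟩
      rw [sat_imp, univGuard_sem Θ₁ i 0 hE, Function.update_self]
      exact h i
  constructor
  · intro h s1'
    have hS : Surv Θ₁ S P₁ (s1' 0).1.1 (s1' 0).1.2 := (s1' 0).2
    have h2 := (step (s1' 0).1.1).mp (h (s1' 0).1.1) (s1' 0).1.2 hS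
    have h3 := (Mclose_sem Θ₁ S P₁ (N' + 1) (by omega) φ hN _ (fun _ => (s1' 0).1.2)
      (Function.update s1 0 (s1' 0).1.1) s2 s2' hE hC m₀ (fun y hy hy' => ?_)).mp h2
    · refine h3 s1' fun y hy hy' => ?_
      have hy0 : y = 0 := by
        rcases (hmemL y).not.mp hy with h'
        omega
      subst hy0
      rw [Function.update_self]
    · have hy0 : y = 0 := by
        rcases (hmemL y).not.mp hy with h'
        omega
      subst hy0
      rw [Function.update_self]
      exact hS
  · intro h u
    rw [step u]
    intro i hS
    refine (Mclose_sem Θ₁ S P₁ (N' + 1) (by omega) φ hN _ (fun _ => i)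
      (Function.update s1 0 u) s2 s2' hE hC m₀ (fun y hy hy' => ?_)).mpr
      (fun s1' _ => h s1')
    have hy0 : y = 0 := by
      rcases (hmemL y).not.mp hy with h'
      omega
    subst hy0
    rw [Function.update_self]
    exact hS

end GraphCFAux
/-! ### The composite scheme -/

namespace GraphCFAux

open CMSO

variable {R R' R'' : RSig}

/-- Decoding of copies of the composite scheme. -/
def dec (Θ₁ : TScheme R R') (Θ₂ : TScheme R' R'') :
    Fin (Θ₁.k * Θ₂.k) → Fin Θ₁.k × Fin Θ₂.k :=
  finProdFinEquiv.symm

/-- The relation formula of the composite scheme, seen over `R'`. -/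
def relF (Θ₁ : TScheme R R') (Θ₂ : TScheme R' R'') (q : R''.Sym)
    (g : Fin (R''.arity q) → Fin (Θ₁.k * Θ₂.k)) : CMSO R' :=
  Θ₂.rel q (fun j => (dec Θ₁ Θ₂ (g j)).2)

/-- The composite transduction scheme. -/
def comp (Θ₁ : TScheme R R') (Θ₂ : TScheme R' R'') : TScheme R R'' where
  k := Θ₁.k * Θ₂.k
  dom := .and (rename id (fun n => 2 * n) Θ₁.dom)
    (CMSO.or (emptyM Θ₁) (Mclose0 Θ₁ (List.range (fb Θ₂.dom)) Θ₂.dom))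
  univ := fun t =>
    .and (univGuard Θ₁ (dec Θ₁ Θ₂ t).1 0)
      (Mclose Θ₁ ((List.range (fb (Θ₂.univ (dec Θ₁ Θ₂ t).2))).filter
          (fun y => decide (1 ≤ y)))
        (fun _ => (dec Θ₁ Θ₂ t).1) (Θ₂.univ (dec Θ₁ Θ₂ t).2))
  rel := fun q g =>
    CMSO.or (emptyM Θ₁)
      (if hA : 0 < R''.arity q then
        Mclose Θ₁ ((List.range (fb (relF Θ₁ Θ₂ q g))).filter
            (fun y => decide (R''.arity q ≤ y)))
          (fun x => (dec Θ₁ Θ₂ (g (if h : x < R''.arity q then ⟨x, h⟩ else ⟨0, hA⟩))).1)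
          (relF Θ₁ Θ₂ q g)
      else Mclose0 Θ₁ (List.range (fb (relF Θ₁ Θ₂ q g))) (relF Θ₁ Θ₂ q g))

variable (Θ₁ : TScheme R R') (Θ₂ : TScheme R' R'') (S : Struc R)
  (Penc P₁ : ℕ → Set S.U) (P₂ : ℕ → Set (TOut Θ₁ S P₁).U)

lemma comp_dom_iff
    (hP1 : ∀ n, Penc (2 * n) = P₁ n)
    (hP2 : ∀ n (m : (TOut Θ₁ S P₁).U), m ∈ P₂ n ↔ m.1.1 ∈ Penc (encM Θ₁ n m.1.2)) :
    ModelsP S Penc (comp Θ₁ Θ₂).dom ↔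
      (ModelsP S P₁ Θ₁.dom ∧ ModelsP (TOut Θ₁ S P₁) P₂ Θ₂.dom) := by
  have hsplit : ∀ s1 : ℕ → S.U, Sat S s1 Penc (comp Θ₁ Θ₂).dom ↔
      (Sat S s1 Penc (rename id (fun n => 2 * n) Θ₁.dom) ∧
        Sat S s1 Penc (CMSO.or (emptyM Θ₁)
          (Mclose0 Θ₁ (List.range (fb Θ₂.dom)) Θ₂.dom))) := fun s1 => Iff.rfl
  have hconj1 : ∀ s1 : ℕ → S.U,
      Sat S s1 Penc (rename id (fun n => 2 * n) Θ₁.dom) ↔ Sat S s1 P₁ Θ₁.dom := by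
    intro s1
    rw [sat_rename (fF := id) (fS := fun n => 2 * n) (fun a b h => h)
      (fun a b h => by simp only at h; omega)]
    have hPP : (Penc ∘ fun n => 2 * n) = P₁ := funext fun n => hP1 n
    rw [hPP]
    exact Iff.rfl
  by_cases hS : Nonempty S.U
  · by_cases hM : ∀ (u : S.U) (i : Fin Θ₁.k), ¬ Surv Θ₁ S P₁ u i
    · have hMv : ∀ s1' : ℕ → (TOut Θ₁ S P₁).U, False := fun s1' =>
        hM (s1' 0).1.1 (s1' 0).1.2 (s1' 0).2
      constructor
      · intro h
        refine ⟨fun s1 => (hconj1 s1).mp ((hsplit s1).mp (h s1)).1,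
          fun s1' => (hMv s1').elim⟩
      · rintro ⟨h1, _⟩ s1
        refine (hsplit s1).mpr ⟨(hconj1 s1).mpr (h1 s1), ?_⟩
        rw [sat_or]
        exact Or.inl ((emptyM_sem Θ₁ hP1).mpr hM)
    -- nonempty intermediate
    · push_neg at hM
      obtain ⟨u₀, i₀, hu₀⟩ := hM
      have hne : ∀ s1 : ℕ → S.U, ¬ Sat S s1 Penc (emptyM Θ₁) := fun s1 h =>
        (emptyM_sem Θ₁ hP1).mp h u₀ i₀ hu₀
      have hconj2 : ∀ s1 : ℕ → S.U,
          Sat S s1 Penc (CMSO.or (emptyM Θ₁)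
            (Mclose0 Θ₁ (List.range (fb Θ₂.dom)) Θ₂.dom)) ↔
          ModelsP (TOut Θ₁ S P₁) P₂ Θ₂.dom := by
        intro s1
        rw [sat_or, Mclose0_sem Θ₁ S P₁ (fb Θ₂.dom) (fb_pos _) Θ₂.dom
          (fun y hy => lt_fb hy) s1 Penc P₂ hP1 hP2 ⟨(u₀, i₀), hu₀⟩]
        constructor
        · rintro (h | h)
          · exact absurd h (hne s1)
          · exact h
        · exact Or.inr
      obtain ⟨uS⟩ := hS
      constructor
      · intro h
        exact ⟨fun s1 => (hconj1 s1).mp ((hsplit s1).mp (h s1)).1,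
          (hconj2 (fun _ => uS)).mp ((hsplit (fun _ => uS)).mp (h (fun _ => uS))).2⟩
      · rintro ⟨h1, h2⟩ s1
        exact (hsplit s1).mpr ⟨(hconj1 s1).mpr (h1 s1), (hconj2 s1).mpr h2⟩
  · constructor
    · intro _
      exact ⟨fun s1 => absurd ⟨s1 0⟩ hS, fun s1' => absurd ⟨(s1' 0).1.1⟩ hS⟩
    · intro _ s1
      exact absurd ⟨s1 0⟩ hS

end GraphCFAux
/-! ### Universe and relation formulas of the composite scheme -/

namespace GraphCFAux

open CMSO

variable {R R' R'' : RSig} (Θ₁ : TScheme R R') (Θ₂ : TScheme R' R'') (S : Struc R)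
  (Penc P₁ : ℕ → Set S.U) (P₂ : ℕ → Set (TOut Θ₁ S P₁).U)

lemma comp_univ_iff
    (hP1 : ∀ n, Penc (2 * n) = P₁ n)
    (hP2 : ∀ n (m : (TOut Θ₁ S P₁).U), m ∈ P₂ n ↔ m.1.1 ∈ Penc (encM Θ₁ n m.1.2))
    (t : Fin ((comp Θ₁ Θ₂).k)) (u : S.U) :
    (∀ s1 : ℕ → S.U, Sat S (Function.update s1 0 u) Penc ((comp Θ₁ Θ₂).univ t)) ↔
      ∃ hs : Surv Θ₁ S P₁ u (dec Θ₁ Θ₂ t).1,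
        ∀ s1' : ℕ → (TOut Θ₁ S P₁).U,
          Sat (TOut Θ₁ S P₁) (Function.update s1' 0 ⟨(u, (dec Θ₁ Θ₂ t).1), hs⟩) P₂
            (Θ₂.univ (dec Θ₁ Θ₂ t).2) := by
  set i := (dec Θ₁ Θ₂ t).1 with hi
  set j := (dec Θ₁ Θ₂ t).2 with hj
  set N := fb (Θ₂.univ j) with hNd
  set L := (List.range N).filter (fun y => decide (1 ≤ y)) with hL
  have hLmem : ∀ y, y ∈ L ↔ (y < N ∧ 1 ≤ y) := by
    intro y
    rw [hL, List.mem_filter, List.mem_range]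
    simp
  have hsplit : ∀ s1 : ℕ → S.U, Sat S s1 Penc ((comp Θ₁ Θ₂).univ t) ↔
      (Sat S s1 Penc (univGuard Θ₁ i 0) ∧
        Sat S s1 Penc (Mclose Θ₁ L (fun _ => i) (Θ₂.univ j))) := fun s1 => Iff.rfl
  constructor
  · intro h
    have hs : Surv Θ₁ S P₁ u i := by
      have h1 := ((hsplit _).mp (h (fun _ => u))).1
      rwa [univGuard_sem Θ₁ i 0 hP1, Function.update_self] at h1
    refine ⟨hs, fun s1' => ?_⟩
    have h2 := ((hsplit _).mp (h (fun _ => u))).2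
    rw [Mclose_sem Θ₁ S P₁ N (fb_pos _) (Θ₂.univ j) (fun y hy => lt_fb hy) L
      (fun _ => i) (Function.update (fun _ => u) 0 u) Penc P₂ hP1 hP2 ⟨(u, i), hs⟩
      (fun y hy hy' => by
        have hy0 : y = 0 := by
          have hyy : ¬(y < N ∧ 1 ≤ y) := fun hyy => hy ((hLmem y).mpr hyy)
          omega
        subst hy0
        rw [Function.update_self]; exact hs)] at h2
    refine h2 (Function.update s1' 0 ⟨(u, i), hs⟩) (fun y hy hy' => ?_)
    have hy0 : y = 0 := by
      have hyy : ¬(y < N ∧ 1 ≤ y) := fun hyy => hy ((hLmem y).mpr hyy)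
      omega
    subst hy0
    exact congrArg Subtype.val (Function.update_self _ _ s1')
  · rintro ⟨hs, h⟩ s1
    refine (hsplit _).mpr ⟨?_, ?_⟩
    · rw [univGuard_sem Θ₁ i 0 hP1, Function.update_self]; exact hs
    · rw [Mclose_sem Θ₁ S P₁ N (fb_pos _) (Θ₂.univ j) (fun y hy => lt_fb hy) L
        (fun _ => i) (Function.update s1 0 u) Penc P₂ hP1 hP2 ⟨(u, i), hs⟩
        (fun y hy hy' => by
          have hy0 : y = 0 := by
            have hyy : ¬(y < N ∧ 1 ≤ y) := fun hyy => hy ((hLmem y).mpr hyy)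
            omega
          subst hy0
          rw [Function.update_self]; exact hs)]
      intro s1' hcon
      have hc0 : (s1' 0).1 = (u, i) := by
        have h0 := hcon 0 (fun h0 => by have := ((hLmem 0).mp h0); omega) (fb_pos _)
        rwa [Function.update_self] at h0
      have hm : (⟨(u, i), hs⟩ : (TOut Θ₁ S P₁).U) = s1' 0 := Subtype.ext hc0.symm
      have h3 := h s1'
      rwa [hm, Function.update_eq_self] at h3

lemma comp_rel_iff
    (hP1 : ∀ n, Penc (2 * n) = P₁ n)
    (hP2 : ∀ n (m : (TOut Θ₁ S P₁).U), m ∈ P₂ n ↔ m.1.1 ∈ Penc (encM Θ₁ n m.1.2))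
    (q : R''.Sym) (g : Fin (R''.arity q) → Fin (Θ₁.k * Θ₂.k))
    (u : Fin (R''.arity q) → S.U)
    (hsv : ∀ j, Surv Θ₁ S P₁ (u j) (dec Θ₁ Θ₂ (g j)).1) :
    (∀ s1 : ℕ → S.U, (∀ j : Fin (R''.arity q), s1 j.1 = u j) →
        Sat S s1 Penc ((comp Θ₁ Θ₂).rel q g)) ↔
      (∀ s1' : ℕ → (TOut Θ₁ S P₁).U,
        (∀ j : Fin (R''.arity q), s1' j.1 = ⟨(u j, (dec Θ₁ Θ₂ (g j)).1), hsv j⟩) →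
        Sat (TOut Θ₁ S P₁) s1' P₂ (relF Θ₁ Θ₂ q g)) := by
  set N := fb (relF Θ₁ Θ₂ q g) with hNd
  by_cases hA : 0 < R''.arity q
  · -- positive arity
    set cg : ℕ → Fin Θ₁.k :=
      fun x => (dec Θ₁ Θ₂ (g (if h : x < R''.arity q then ⟨x, h⟩ else ⟨0, hA⟩))).1 with hcg
    set L := (List.range N).filter (fun y => decide (R''.arity q ≤ y)) with hL
    have hLmem : ∀ y, y ∈ L ↔ (y < N ∧ R''.arity q ≤ y) := by
      intro y
      rw [hL, List.mem_filter, List.mem_range]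
      simp
    have hform : ∀ s1 : ℕ → S.U, Sat S s1 Penc ((comp Θ₁ Θ₂).rel q g) ↔
        (Sat S s1 Penc (emptyM Θ₁) ∨
          Sat S s1 Penc (Mclose Θ₁ L cg (relF Θ₁ Θ₂ q g))) := by
      intro s1
      have h0 : (comp Θ₁ Θ₂).rel q g = CMSO.or (emptyM Θ₁)
          (Mclose Θ₁ L cg (relF Θ₁ Θ₂ q g)) := by
        show CMSO.or (emptyM Θ₁) (dite _ _ _) = _
        rw [dif_pos hA]
      rw [h0, sat_or]
    have hne : ∀ s1 : ℕ → S.U, ¬ Sat S s1 Penc (emptyM Θ₁) := fun s1 h =>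
      (emptyM_sem Θ₁ hP1).mp h (u ⟨0, hA⟩) _ (hsv ⟨0, hA⟩)
    -- the per-store equivalence
    have key : ∀ s1 : ℕ → S.U, (∀ j : Fin (R''.arity q), s1 j.1 = u j) →
        (Sat S s1 Penc (Mclose Θ₁ L cg (relF Θ₁ Θ₂ q g)) ↔
          (∀ s1' : ℕ → (TOut Θ₁ S P₁).U,
            (∀ j : Fin (R''.arity q),
              s1' j.1 = ⟨(u j, (dec Θ₁ Θ₂ (g j)).1), hsv j⟩) →
            Sat (TOut Θ₁ S P₁) s1' P₂ (relF Θ₁ Θ₂ q g))) := by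
      intro s1 hpin
      have hbase : ∀ y, y ∉ L → y < N → Surv Θ₁ S P₁ (s1 y) (cg y) := by
        intro y hy hy'
        have hyA : y < R''.arity q := by
          have hyy : ¬(y < N ∧ R''.arity q ≤ y) := fun hyy => hy ((hLmem y).mpr hyy)
          omega
        have e1 : s1 y = u ⟨y, hyA⟩ := hpin ⟨y, hyA⟩
        have e2 : cg y = (dec Θ₁ Θ₂ (g ⟨y, hyA⟩)).1 := by
          rw [hcg]; simp only [dif_pos hyA]
        rw [e1, e2]
        exact hsv ⟨y, hyA⟩
      rw [Mclose_sem Θ₁ S P₁ N (fb_pos _) (relF Θ₁ Θ₂ q g) (fun y hy => lt_fb hy) L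
        cg s1 Penc P₂ hP1 hP2 ⟨(u ⟨0, hA⟩, (dec Θ₁ Θ₂ (g ⟨0, hA⟩)).1), hsv ⟨0, hA⟩⟩ hbase]
      constructor
      · intro h s1' hpin'
        refine h s1' (fun y hy hy' => ?_)
        have hyA : y < R''.arity q := by
          have hyy : ¬(y < N ∧ R''.arity q ≤ y) := fun hyy => hy ((hLmem y).mpr hyy)
          omega
        have e0 : s1' y = ⟨(u ⟨y, hyA⟩, (dec Θ₁ Θ₂ (g ⟨y, hyA⟩)).1), hsv ⟨y, hyA⟩⟩ :=
          hpin' ⟨y, hyA⟩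
        have e1 : s1 y = u ⟨y, hyA⟩ := hpin ⟨y, hyA⟩
        have e2 : cg y = (dec Θ₁ Θ₂ (g ⟨y, hyA⟩)).1 := by
          rw [hcg]; simp only [dif_pos hyA]
        rw [e0, e1, e2]
      · intro h s1' hcon
        classical
        set s1'' : ℕ → (TOut Θ₁ S P₁).U :=
          fun y => if hy : y < R''.arity q then
            ⟨(u ⟨y, hy⟩, (dec Θ₁ Θ₂ (g ⟨y, hy⟩)).1), hsv ⟨y, hy⟩⟩ else s1' y with hs1''
        have h2 := h s1'' (fun j => by
          show s1'' j.1 = _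
          have e0 : s1'' j.1 =
              ⟨(u ⟨j.1, j.isLt⟩, (dec Θ₁ Θ₂ (g ⟨j.1, j.isLt⟩)).1), hsv ⟨j.1, j.isLt⟩⟩ :=
            dif_pos j.isLt
          rw [e0])
        refine (sat_congrFO (fun y hy => ?_)).mp h2
        have hyN : y < N := lt_fb hy
        by_cases hyA : y < R''.arity q
        · have e0 : s1'' y =
              ⟨(u ⟨y, hyA⟩, (dec Θ₁ Θ₂ (g ⟨y, hyA⟩)).1), hsv ⟨y, hyA⟩⟩ := dif_pos hyA
          have e2 : (s1' y).1 = (s1 y, cg y) :=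
            hcon y (fun hyL => by have := (hLmem y).mp hyL; omega) hyN
          have e1 : s1 y = u ⟨y, hyA⟩ := hpin ⟨y, hyA⟩
          have e3 : cg y = (dec Θ₁ Θ₂ (g ⟨y, hyA⟩)).1 := by
            rw [hcg]; simp only [dif_pos hyA]
          rw [e0]
          apply Subtype.ext
          rw [e2, e1, e3]
        · have e0 : s1'' y = s1' y := dif_neg hyA
          rw [e0]
    constructor
    · intro h s1' hpin'
      classical
      set s1₀ : ℕ → S.U :=
        fun y => if hy : y < R''.arity q then u ⟨y, hy⟩ else u ⟨0, hA⟩ with hs1₀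
      have hpin₀ : ∀ j : Fin (R''.arity q), s1₀ j.1 = u j := fun j => by
        show s1₀ j.1 = u j
        have e0 : s1₀ j.1 = u ⟨j.1, j.isLt⟩ := dif_pos j.isLt
        rw [e0]
      have h2 := (hform s1₀).mp (h s1₀ hpin₀)
      rcases h2 with h2 | h2
      · exact absurd h2 (hne s1₀)
      · exact (key s1₀ hpin₀).mp h2 s1' hpin'
    · intro h s1 hpin
      refine (hform s1).mpr (Or.inr ?_)
      exact (key s1 hpin).mpr (fun s1' hpin' => h s1' hpin')
  · -- arity zero
    have hform : ∀ s1 : ℕ → S.U, Sat S s1 Penc ((comp Θ₁ Θ₂).rel q g) ↔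
        (Sat S s1 Penc (emptyM Θ₁) ∨
          Sat S s1 Penc (Mclose0 Θ₁ (List.range N) (relF Θ₁ Θ₂ q g))) := by
      intro s1
      have h0 : (comp Θ₁ Θ₂).rel q g = CMSO.or (emptyM Θ₁)
          (Mclose0 Θ₁ (List.range N) (relF Θ₁ Θ₂ q g)) := by
        show CMSO.or (emptyM Θ₁) (dite _ _ _) = _
        rw [dif_neg hA]
      rw [h0, sat_or]
    by_cases hS : Nonempty S.U
    · by_cases hM : ∀ (v : S.U) (i : Fin Θ₁.k), ¬ Surv Θ₁ S P₁ v i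
      · constructor
        · intro _ s1' _
          exact ((hM (s1' 0).1.1 (s1' 0).1.2) (s1' 0).2).elim
        · intro _ s1 _
          exact (hform s1).mpr (Or.inl ((emptyM_sem Θ₁ hP1).mpr hM))
      · push_neg at hM
        obtain ⟨v₀, i₀, hv₀⟩ := hM
        have hne : ∀ s1 : ℕ → S.U, ¬ Sat S s1 Penc (emptyM Θ₁) := fun s1 h =>
          (emptyM_sem Θ₁ hP1).mp h v₀ i₀ hv₀
        obtain ⟨uS⟩ := hS
        have key : ∀ s1 : ℕ → S.U,
            Sat S s1 Penc (Mclose0 Θ₁ (List.range N) (relF Θ₁ Θ₂ q g)) ↔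
            ∀ s1' : ℕ → (TOut Θ₁ S P₁).U,
              Sat (TOut Θ₁ S P₁) s1' P₂ (relF Θ₁ Θ₂ q g) := fun s1 =>
          Mclose0_sem Θ₁ S P₁ N (fb_pos _) (relF Θ₁ Θ₂ q g) (fun y hy => lt_fb hy)
            s1 Penc P₂ hP1 hP2 ⟨(v₀, i₀), hv₀⟩
        constructor
        · intro h s1' _
          have h2 := (hform (fun _ => uS)).mp (h (fun _ => uS) (fun j => (hA j.pos).elim))
          rcases h2 with h2 | h2
          · exact absurd h2 (hne _)
          · exact (key _).mp h2 s1'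
        · intro h s1 _
          refine (hform s1).mpr (Or.inr ?_)
          exact (key s1).mpr (fun s1' => h s1' (fun j => (hA j.pos).elim))
    · constructor
      · intro _ s1' _
        exact absurd ⟨(s1' 0).1.1⟩ hS
      · intro _ s1 _
        exact absurd ⟨s1 0⟩ hS

end GraphCFAux
/-! ### The composite scheme computes the composition -/

namespace GraphCFAux

open CMSO

variable {R R' R'' : RSig} (Θ₁ : TScheme R R') (Θ₂ : TScheme R' R'') (S : Struc R)
  (Penc P₁ : ℕ → Set S.U) (P₂ : ℕ → Set (TOut Θ₁ S P₁).U)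

lemma siso_refl (T : Struc R) : SIso T T := ⟨Equiv.refl _, fun _ _ => Iff.rfl⟩

lemma comp_univ_mk
    (hP1 : ∀ n, Penc (2 * n) = P₁ n)
    (hP2 : ∀ n (m : (TOut Θ₁ S P₁).U), m ∈ P₂ n ↔ m.1.1 ∈ Penc (encM Θ₁ n m.1.2))
    (m : (TOut Θ₁ S P₁).U) (j : Fin Θ₂.k)
    (h : ∀ s1' : ℕ → (TOut Θ₁ S P₁).U,
      Sat (TOut Θ₁ S P₁) (Function.update s1' 0 m) P₂ (Θ₂.univ j)) :
    ∀ s1 : ℕ → S.U, Sat S (Function.update s1 0 m.1.1) Penc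
      ((comp Θ₁ Θ₂).univ (finProdFinEquiv (m.1.2, j))) := by
  have hdec : dec Θ₁ Θ₂ (finProdFinEquiv (m.1.2, j)) = (m.1.2, j) :=
    Equiv.symm_apply_apply _ _
  rw [comp_univ_iff Θ₁ Θ₂ S Penc P₁ P₂ hP1 hP2 (finProdFinEquiv (m.1.2, j)) m.1.1, hdec]
  refine ⟨m.2, fun s1' => ?_⟩
  have hval : (⟨(m.1.1, m.1.2), m.2⟩ : (TOut Θ₁ S P₁).U) = m := Subtype.ext Prod.mk.eta
  show Sat (TOut Θ₁ S P₁) (Function.update s1' 0 ⟨(m.1.1, m.1.2), m.2⟩) P₂ (Θ₂.univ j)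
  rw [hval]
  exact h s1'

/-- The isomorphism between the output of the composite scheme and the output of
the second scheme on the intermediate structure. -/
lemma comp_tout_siso
    (hP1 : ∀ n, Penc (2 * n) = P₁ n)
    (hP2 : ∀ n (m : (TOut Θ₁ S P₁).U), m ∈ P₂ n ↔ m.1.1 ∈ Penc (encM Θ₁ n m.1.2)) :
    SIso (TOut (comp Θ₁ Θ₂) S Penc) (TOut Θ₂ (TOut Θ₁ S P₁) P₂) := by
  refine ⟨{
    toFun := fun a =>
      ⟨(⟨(a.1.1, (dec Θ₁ Θ₂ a.1.2).1),
          ((comp_univ_iff Θ₁ Θ₂ S Penc P₁ P₂ hP1 hP2 a.1.2 a.1.1).mp a.2).choose⟩,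
        (dec Θ₁ Θ₂ a.1.2).2),
        ((comp_univ_iff Θ₁ Θ₂ S Penc P₁ P₂ hP1 hP2 a.1.2 a.1.1).mp a.2).choose_spec⟩
    invFun := fun b =>
      ⟨(b.1.1.1.1, finProdFinEquiv (b.1.1.1.2, b.1.2)),
        comp_univ_mk Θ₁ Θ₂ S Penc P₁ P₂ hP1 hP2 b.1.1 b.1.2 b.2⟩
    left_inv := ?_
    right_inv := ?_ }, ?_⟩
  · intro a
    apply Subtype.ext
    show (a.1.1, finProdFinEquiv ((dec Θ₁ Θ₂ a.1.2).1, (dec Θ₁ Θ₂ a.1.2).2)) = a.1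
    have h1 : ((dec Θ₁ Θ₂ a.1.2).1, (dec Θ₁ Θ₂ a.1.2).2) = dec Θ₁ Θ₂ a.1.2 := Prod.mk.eta
    rw [h1]
    have h2 : finProdFinEquiv (dec Θ₁ Θ₂ a.1.2) = a.1.2 := Equiv.apply_symm_apply _ _
    rw [h2]
    exact Prod.mk.eta
  · intro b
    apply Subtype.ext
    apply Prod.ext
    · apply Subtype.ext
      show (b.1.1.1.1, (dec Θ₁ Θ₂ (finProdFinEquiv (b.1.1.1.2, b.1.2))).1) = b.1.1.1
      have hdec : dec Θ₁ Θ₂ (finProdFinEquiv (b.1.1.1.2, b.1.2)) = (b.1.1.1.2, b.1.2) :=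
        Equiv.symm_apply_apply _ _
      rw [hdec]
    · show (dec Θ₁ Θ₂ (finProdFinEquiv (b.1.1.1.2, b.1.2))).2 = b.1.2
      have hdec : dec Θ₁ Θ₂ (finProdFinEquiv (b.1.1.1.2, b.1.2)) = (b.1.1.1.2, b.1.2) :=
        Equiv.symm_apply_apply _ _
      rw [hdec]
  · intro q f
    have hsv : ∀ j : Fin (R''.arity q),
        Surv Θ₁ S P₁ ((f j).1.1) (dec Θ₁ Θ₂ ((f j).1.2)).1 := fun j =>
      ((comp_univ_iff Θ₁ Θ₂ S Penc P₁ P₂ hP1 hP2 (f j).1.2 (f j).1.1).mp (f j).2).choose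
    exact comp_rel_iff Θ₁ Θ₂ S Penc P₁ P₂ hP1 hP2 q (fun j => (f j).1.2)
      (fun j => (f j).1.1) hsv

/-- The composite scheme computes exactly the composition of the two
transductions. -/
lemma comp_trel (S'' : Struc R'') :
    TRel (comp Θ₁ Θ₂) S S'' ↔ ∃ S', TRel Θ₁ S S' ∧ TRel Θ₂ S' S'' := by
  constructor
  · rintro ⟨Penc, hdom, hiso⟩
    set P₁ : ℕ → Set S.U := fun n => Penc (2 * n) with hP₁def
    set P₂ : ℕ → Set (TOut Θ₁ S P₁).U :=
      fun n => {m : (TOut Θ₁ S P₁).U | m.1.1 ∈ Penc (encM Θ₁ n m.1.2)} with hP₂def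
    have hP1 : ∀ n, Penc (2 * n) = P₁ n := fun n => rfl
    have hP2 : ∀ n (m : (TOut Θ₁ S P₁).U),
        m ∈ P₂ n ↔ m.1.1 ∈ Penc (encM Θ₁ n m.1.2) := fun n m => Iff.rfl
    obtain ⟨h1, h2⟩ := (comp_dom_iff Θ₁ Θ₂ S Penc P₁ P₂ hP1 hP2).mp hdom
    refine ⟨TOut Θ₁ S P₁, ⟨P₁, h1, siso_refl _⟩, ⟨P₂, h2, ?_⟩⟩
    exact siso_trans (siso_symm (comp_tout_siso Θ₁ Θ₂ S Penc P₁ P₂ hP1 hP2)) hiso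
  · rintro ⟨S', ⟨P₁, h1, hiso1⟩, hrel2⟩
    obtain ⟨P₂, h2, hiso2⟩ := trel_iso hiso1 hrel2
    classical
    have hk : ∀ (m : (TOut Θ₁ S P₁).U), 0 < Θ₁.k := fun m => m.1.2.pos
    set Penc : ℕ → Set S.U := fun n =>
      if n % 2 = 0 then P₁ (n / 2)
      else {u : S.U | ∃ m : (TOut Θ₁ S P₁).U, m.1.1 = u ∧
        m.1.2.1 = (n / 2) % Θ₁.k ∧ m ∈ P₂ ((n / 2) / Θ₁.k)} with hPencdef
    have hP1 : ∀ n, Penc (2 * n) = P₁ n := by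
      intro n
      have h0 : (2 * n) % 2 = 0 := by omega
      have h1' : (2 * n) / 2 = n := by omega
      show (if (2 * n) % 2 = 0 then P₁ ((2 * n) / 2) else _) = P₁ n
      rw [if_pos h0, h1']
    have hP2 : ∀ n (m : (TOut Θ₁ S P₁).U),
        m ∈ P₂ n ↔ m.1.1 ∈ Penc (encM Θ₁ n m.1.2) := by
      intro n m
      have hkpos : 0 < Θ₁.k := hk m
      have hodd : encM Θ₁ n m.1.2 % 2 = 1 := by
        show (2 * (n * Θ₁.k + m.1.2.1) + 1) % 2 = 1
        omega
      have hdiv : encM Θ₁ n m.1.2 / 2 = n * Θ₁.k + m.1.2.1 := by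
        show (2 * (n * Θ₁.k + m.1.2.1) + 1) / 2 = _
        omega
      have hmod : (n * Θ₁.k + m.1.2.1) % Θ₁.k = m.1.2.1 := by
        rw [Nat.mul_comm n, Nat.mul_add_mod]
        exact Nat.mod_eq_of_lt m.1.2.isLt
      have hdiv2 : (n * Θ₁.k + m.1.2.1) / Θ₁.k = n := by
        rw [Nat.mul_comm n, Nat.mul_add_div hkpos, Nat.div_eq_of_lt m.1.2.isLt,
          Nat.add_zero]
      have hPv : Penc (encM Θ₁ n m.1.2) = {u : S.U | ∃ m' : (TOut Θ₁ S P₁).U,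
          m'.1.1 = u ∧ m'.1.2.1 = m.1.2.1 ∧ m' ∈ P₂ n} := by
        show (if encM Θ₁ n m.1.2 % 2 = 0 then _ else _) = _
        rw [if_neg (by omega), hdiv, hmod, hdiv2]
      rw [hPv]
      constructor
      · intro hm
        exact ⟨m, rfl, rfl, hm⟩
      · rintro ⟨m', hm1, hm2, hm3⟩
        have : m' = m := by
          apply Subtype.ext
          apply Prod.ext
          · exact hm1
          · exact Fin.ext hm2
        rwa [this] at hm3
    refine ⟨Penc, (comp_dom_iff Θ₁ Θ₂ S Penc P₁ P₂ hP1 hP2).mpr ⟨h1, h2⟩, ?_⟩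
    exact siso_trans (comp_tout_siso Θ₁ Θ₂ S Penc P₁ P₂ hP1 hP2) hiso2

end GraphCFAux
/-- The composition of two definable transductions between
relational structures is a definable transduction. -/
theorem defTrans_comp {R R' R'' : RSig}
    (δ₁ : Struc R → Struc R' → Prop) (δ₂ : Struc R' → Struc R'' → Prop)
    (h₁ : DefTrans δ₁) (h₂ : DefTrans δ₂) :
    DefTrans (fun S S'' => ∃ S', δ₁ S S' ∧ δ₂ S' S'') := by
  obtain ⟨Θ₁, hΘ₁⟩ := h₁
  obtain ⟨Θ₂, hΘ₂⟩ := h₂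
  refine ⟨GraphCFAux.comp Θ₁ Θ₂, fun S S'' => ?_⟩
  show (∃ S', δ₁ S S' ∧ δ₂ S' S'') ↔ TRel (GraphCFAux.comp Θ₁ Θ₂) S S''
  rw [GraphCFAux.comp_trel Θ₁ Θ₂ S S'']
  exact exists_congr fun S' => and_congr (hΘ₁ S S') (hΘ₂ S' S'')

end GraphCF
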